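/- arXiv:1603.03671 — 2 statements merged into one kernel-verified Lean document; each statement's English description precedes it below -/
import Mathlib

section
/- Let Σ be a common finite subgroup of countable groups Γ₁ and Γ₂, let Γ = Γ₁ *_Σ Γ₂ be the amalgamated free product, and let ρ : Γ → Aut(R) be a faithful action on a countable simple graph R with property (R) that is non-singular and has property (F), such that the restricted action of Σ on R is free and Σ is highly core-free with respect to both restricted actions Γ₁↷R and Γ₂↷R. Let Z = { α ∈ Aut(R) : α ρ(σ) = ρ(σ) α for all σ ∈ Σ }, and for α ∈ Z let π_α : Γ → Aut(R) be the unique homomorphism with π_α(g) = ρ(g) for g ∈ Γ₁ and π_α(g) = α⁻¹ ρ(g) α for g ∈ Γ₂. Then the set O = { α ∈ Z : π_α is faithful and homogeneous } is a dense G_δ subset of Z. -/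
/-- A simple graph has property (R) if for all disjoint finite subsets `U`, `W` of its
vertex set there exists a vertex outside `U ∪ W` adjacent to every vertex of `U` and to
no vertex of `W`. -/
def SimpleGraph.HasPropR {V : Type*} (G : SimpleGraph V) : Prop :=
  ∀ U W : Finset V, Disjoint U W →
    ∃ z, z ∉ U ∧ z ∉ W ∧ (∀ u ∈ U, G.Adj z u) ∧ (∀ w ∈ W, ¬ G.Adj z w)

/-- The Polish topology of pointwise convergence on the automorphism group of a graph,
induced by the embedding `α ↦ (α, α⁻¹)` into `(V → V) × (V → V)` with `V` discrete. -/
instance graphAutTopology {V : Type*} (G : SimpleGraph V) :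
    TopologicalSpace (G ≃g G) :=
  letI : TopologicalSpace V := ⊥
  TopologicalSpace.induced
    (fun α => ((fun x => α x, fun x => α.symm x) : (V → V) × (V → V))) inferInstance

/-- An action of `Γ` on a graph `G` is homogeneous if every isomorphism between finite
induced subgraphs is realised by a group element. -/
def IsHomogeneousAction {Γ : Type*} [Group Γ] {V : Type*} (G : SimpleGraph V)
    (ρ : Γ →* (G ≃g G)) : Prop :=
  ∀ (A : Finset V) (φ : V → V), Set.InjOn φ (↑A : Set V) →
    (∀ u ∈ A, ∀ v ∈ A, G.Adj u v ↔ G.Adj (φ u) (φ v)) →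
    ∃ g : Γ, ∀ u ∈ A, ρ g u = φ u

/-- The action is non-singular: no vertex is adjacent to one of its translates. -/
def NonSingularAction {Γ : Type*} [Group Γ] {V : Type*} (G : SimpleGraph V)
    (ρ : Γ →* (G ≃g G)) : Prop :=
  ∀ (g : Γ) (u : V), ¬ G.Adj (ρ g u) u

/-- Property (F): for all finite `S ⊆ Γ \ {1}` and finite `F ⊆ V` there is a vertex
outside `F`, not adjacent to any vertex of `F`, moved by every element of `S`. -/
def PropertyF {Γ : Type*} [Group Γ] {V : Type*} (G : SimpleGraph V)
    (ρ : Γ →* (G ≃g G)) : Prop :=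
  ∀ (S : Finset Γ) (F : Finset V), (1 : Γ) ∉ S →
    ∃ x : V, x ∉ F ∧ (∀ u ∈ F, ¬ G.Adj x u) ∧ ∀ g ∈ S, ρ g x ≠ x

/-- A subgroup `S ≤ H ≤ Γ` is highly core-free with respect to the action of `H` on a
graph `G` obtained by restricting an action of `Γ`. -/
def HighlyCoreFreeWrt {Γ : Type*} [Group Γ] {V : Type*} (G : SimpleGraph V)
    (ρ : Γ →* (G ≃g G)) (S H : Subgroup Γ) : Prop :=
  ∀ F : Finset V, ∃ g ∈ H,
    (∀ u ∈ F, ∀ v ∈ F, ∀ σ ∈ S, ρ g u ≠ ρ σ v) ∧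
    (∀ u ∈ F, ∀ v ∈ F, ¬ G.Adj (ρ g u) v) ∧
    (∀ u ∈ F, ∀ v ∈ F, u ≠ v → ∀ σ ∈ S, ∀ τ ∈ S, ρ σ (ρ g u) ≠ ρ τ (ρ g v)) ∧
    (∀ u ∈ F, ∀ v ∈ F, ∀ σ ∈ S, σ ≠ 1 → ¬ G.Adj (ρ σ (ρ g u)) (ρ g v))

/-- `Γ` is the amalgamated free product of its subgroups `Γ₁` and `Γ₂` over the common
subgroup `S`, expressed via the universal property of the pushout. -/
def IsAmalgamatedProduct {Γ : Type*} [Group Γ] (Γ₁ Γ₂ S : Subgroup Γ)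
    (h₁ : S ≤ Γ₁) (h₂ : S ≤ Γ₂) : Prop :=
  ∀ (H : Type) [Group H] (f₁ : Γ₁ →* H) (f₂ : Γ₂ →* H),
    (∀ (x : Γ) (hx : x ∈ S), f₁ ⟨x, h₁ hx⟩ = f₂ ⟨x, h₂ hx⟩) →
    ∃! f : Γ →* H, (∀ a : Γ₁, f a = f₁ a) ∧ (∀ b : Γ₂, f b = f₂ b)

namespace AD

open Function Set

attribute [local instance] Classical.propDecidable

variable {Γ : Type} [Group Γ] {V : Type} {R : SimpleGraph V}

structure Ctx (Γ : Type) [Group Γ] (V : Type) (R : SimpleGraph V) where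
  ρ : Γ →* (R ≃g R)
  S : Subgroup Γ
  Sfin : Finset Γ
  hSfin : ∀ σ, σ ∈ Sfin ↔ σ ∈ S
  hR : R.HasPropR
  hns : NonSingularAction R ρ
  hF : PropertyF R ρ
  hfree : ∀ σ ∈ S, ∀ x : V, ρ σ x = x → σ = 1
  Γ₁ : Subgroup Γ
  Γ₂ : Subgroup Γ
  hS₁ : S ≤ Γ₁
  hS₂ : S ≤ Γ₂
  hamalg : IsAmalgamatedProduct Γ₁ Γ₂ S hS₁ hS₂
  hfaith : Function.Injective ρ
  hhcf₁ : HighlyCoreFreeWrt R ρ S Γ₁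
  hhcf₂ : HighlyCoreFreeWrt R ρ S Γ₂

namespace Ctx

variable (C : Ctx Γ V R)

lemma rho_mul_apply (a b : Γ) (x : V) : C.ρ a (C.ρ b x) = C.ρ (a * b) x := by
  rw [map_mul]; rfl

lemma rho_inv_apply (a : Γ) (x : V) : C.ρ a⁻¹ (C.ρ a x) = x := by
  rw [C.rho_mul_apply, inv_mul_cancel, map_one]; rfl

lemma rho_inv_apply' (a : Γ) (x : V) : C.ρ a (C.ρ a⁻¹ x) = x := by
  rw [C.rho_mul_apply, mul_inv_cancel, map_one]; rfl

lemma rho_adj_iff (a : Γ) (x y : V) : R.Adj (C.ρ a x) (C.ρ a y) ↔ R.Adj x y :=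
  (C.ρ a).map_adj_iff

lemma rho_adj_left (a : Γ) (x y : V) : R.Adj (C.ρ a x) y ↔ R.Adj x (C.ρ a⁻¹ y) := by
  conv_lhs => rw [← C.rho_inv_apply' a y]
  exact C.rho_adj_iff a x (C.ρ a⁻¹ y)

lemma rho_eq_iff (a : Γ) (x y : V) : C.ρ a x = y ↔ x = C.ρ a⁻¹ y := by
  constructor
  · rintro rfl; rw [C.rho_inv_apply]
  · rintro rfl; rw [C.rho_inv_apply']

/-- two group elements of `S` acting the same way anywhere are equal -/
lemma free' {σ τ : Γ} (hσ : σ ∈ C.S) (hτ : τ ∈ C.S) (x : V)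
    (h : C.ρ σ x = C.ρ τ x) : σ = τ := by
  have h2 : C.ρ (τ⁻¹ * σ) x = x := by
    rw [← C.rho_mul_apply, h, C.rho_inv_apply]
  have h3 := C.hfree (τ⁻¹ * σ) (mul_mem (inv_mem hτ) hσ) x h2
  exact (inv_mul_eq_one.mp h3).symm

end Ctx
end AD

namespace AD
attribute [local instance] Classical.propDecidable
namespace Ctx
variable {Γ : Type} [Group Γ] {V : Type} {R : SimpleGraph V}
variable (C : Ctx Γ V R)

/-- the (finite) orbit of a vertex under `ρ(S)` -/
noncomputable def orb (z : V) : Finset V := C.Sfin.image (fun σ => C.ρ σ z)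

lemma mem_orb {z y : V} : y ∈ C.orb z ↔ ∃ σ ∈ C.S, C.ρ σ z = y := by
  simp only [orb, Finset.mem_image]
  constructor
  · rintro ⟨σ, hσ, rfl⟩; exact ⟨σ, (C.hSfin σ).1 hσ, rfl⟩
  · rintro ⟨σ, hσ, rfl⟩; exact ⟨σ, (C.hSfin σ).2 hσ, rfl⟩

lemma self_mem_orb (z : V) : z ∈ C.orb z :=
  (C.mem_orb).2 ⟨1, one_mem _, by simp⟩

lemma rho_mem_orb {σ : Γ} (hσ : σ ∈ C.S) (z : V) : C.ρ σ z ∈ C.orb z :=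
  (C.mem_orb).2 ⟨σ, hσ, rfl⟩

end Ctx

open Function Set

variable {Γ : Type} [Group Γ] {V : Type} {R : SimpleGraph V}

/-- A finite `ρ(S)`-equivariant partial isomorphism of `R`. -/
structure PIso (C : Ctx Γ V R) where
  dom : Finset V
  ran : Finset V
  f : V → V
  g : V → V
  mapsf : ∀ x ∈ dom, f x ∈ ran
  mapsg : ∀ y ∈ ran, g y ∈ dom
  lg : ∀ x ∈ dom, g (f x) = x
  rg : ∀ y ∈ ran, f (g y) = y
  adj : ∀ u ∈ dom, ∀ v ∈ dom, R.Adj (f u) (f v) ↔ R.Adj u v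
  domS : ∀ σ ∈ C.S, ∀ x ∈ dom, C.ρ σ x ∈ dom
  equi : ∀ σ ∈ C.S, ∀ x ∈ dom, f (C.ρ σ x) = C.ρ σ (f x)

namespace PIso

variable {C : Ctx Γ V R} (p : PIso C)

lemma injOn {x y : V} (hx : x ∈ p.dom) (hy : y ∈ p.dom) (h : p.f x = p.f y) : x = y := by
  have := p.lg x hx
  rw [h, p.lg y hy] at this
  exact this.symm

lemma ranS : ∀ σ ∈ C.S, ∀ y ∈ p.ran, C.ρ σ y ∈ p.ran := by
  intro σ hσ y hy
  have h1 : C.ρ σ y = p.f (C.ρ σ (p.g y)) := by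
    rw [p.equi σ hσ _ (p.mapsg y hy), p.rg y hy]
  rw [h1]
  exact p.mapsf _ (p.domS σ hσ _ (p.mapsg y hy))

lemma equig : ∀ σ ∈ C.S, ∀ y ∈ p.ran, p.g (C.ρ σ y) = C.ρ σ (p.g y) := by
  intro σ hσ y hy
  have h1 : C.ρ σ y = p.f (C.ρ σ (p.g y)) := by
    rw [p.equi σ hσ _ (p.mapsg y hy), p.rg y hy]
  rw [h1, p.lg _ (p.domS σ hσ _ (p.mapsg y hy))]

lemma adj' : ∀ u ∈ p.ran, ∀ v ∈ p.ran, R.Adj (p.g u) (p.g v) ↔ R.Adj u v := by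
  intro u hu v hv
  conv_rhs => rw [← p.rg u hu, ← p.rg v hv]
  exact (p.adj _ (p.mapsg u hu) _ (p.mapsg v hv)).symm

/-- the inverse partial isomorphism -/
def symm : PIso C where
  dom := p.ran
  ran := p.dom
  f := p.g
  g := p.f
  mapsf := p.mapsg
  mapsg := p.mapsf
  lg := p.rg
  rg := p.lg
  adj := p.adj'
  domS := p.ranS
  equi := p.equig

@[simp] lemma symm_dom : p.symm.dom = p.ran := rfl
@[simp] lemma symm_ran : p.symm.ran = p.dom := rfl
@[simp] lemma symm_f : p.symm.f = p.g := rfl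
@[simp] lemma symm_g : p.symm.g = p.f := rfl
@[simp] lemma symm_symm : p.symm.symm = p := rfl

/-- extension order on partial isomorphisms -/
def Le (p q : PIso C) : Prop := p.dom ⊆ q.dom ∧ ∀ x ∈ p.dom, q.f x = p.f x

lemma Le.refl : p.Le p := ⟨Finset.Subset.refl _, fun _ _ => rfl⟩

lemma Le.trans {p q r : PIso C} (h1 : p.Le q) (h2 : q.Le r) : p.Le r :=
  ⟨h1.1.trans h2.1, fun x hx => by rw [h2.2 x (h1.1 hx), h1.2 x hx]⟩

lemma Le.ran_subset {p q : PIso C} (h : p.Le q) : p.ran ⊆ q.ran := by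
  intro y hy
  have h1 : y = q.f (p.g y) := by rw [h.2 _ (p.mapsg y hy), p.rg y hy]
  rw [h1]; exact q.mapsf _ (h.1 (p.mapsg y hy))

lemma Le.g_eq {p q : PIso C} (h : p.Le q) : ∀ y ∈ p.ran, q.g y = p.g y := by
  intro y hy
  have h1 : y = q.f (p.g y) := by rw [h.2 _ (p.mapsg y hy), p.rg y hy]
  conv_lhs => rw [h1]
  exact q.lg _ (h.1 (p.mapsg y hy))

lemma Le.symm {p q : PIso C} (h : p.Le q) : p.symm.Le q.symm :=
  ⟨h.ran_subset, h.g_eq⟩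

/-- orbit of a point in the domain stays out iff the point is out -/
lemma orb_disjoint_dom {z : V} (hz : z ∉ p.dom) : ∀ y ∈ C.orb z, y ∉ p.dom := by
  intro y hy hyd
  obtain ⟨σ, hσ, rfl⟩ := (C.mem_orb).1 hy
  exact hz (by
    have := p.domS σ⁻¹ (inv_mem hσ) _ hyd
    rwa [C.rho_inv_apply] at this)

end PIso
end AD

namespace AD
attribute [local instance] Classical.propDecidable
open Function Set
variable {Γ : Type} [Group Γ] {V : Type} {R : SimpleGraph V}
namespace PIso
variable {C : Ctx Γ V R}

/-- Main extension lemma: a fresh `S`-orbit can be added to a partial isomorphism,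
provided the image point has the matching adjacency pattern. -/
lemma extend_orbit (p : PIso C) {z v : V} (hz : z ∉ p.dom) (hv : v ∉ p.ran)
    (hmatch : ∀ w ∈ p.dom, R.Adj v (p.f w) ↔ R.Adj z w) :
    ∃ q : PIso C, p.Le q ∧ q.dom = p.dom ∪ C.orb z ∧ q.ran = p.ran ∪ C.orb v ∧ q.f z = v := by
  classical
  set f' : V → V := fun x =>
    if h : ∃ σ, σ ∈ C.S ∧ C.ρ σ z = x then C.ρ h.choose v else p.f x with hf'
  set g' : V → V := fun y =>
    if h : ∃ σ, σ ∈ C.S ∧ C.ρ σ v = y then C.ρ h.choose z else p.g y with hg'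
  have horbd : ∀ y ∈ C.orb z, y ∉ p.dom := p.orb_disjoint_dom hz
  have horbr : ∀ y ∈ C.orb v, y ∉ p.ran := p.symm.orb_disjoint_dom hv
  have hfz : ∀ σ ∈ C.S, f' (C.ρ σ z) = C.ρ σ v := by
    intro σ hσ
    have hex : ∃ τ, τ ∈ C.S ∧ C.ρ τ z = C.ρ σ z := ⟨σ, hσ, rfl⟩
    have := hex.choose_spec
    have heq : hex.choose = σ := C.free' this.1 hσ z this.2
    simp only [hf', dif_pos hex, heq]
  have hgv : ∀ σ ∈ C.S, g' (C.ρ σ v) = C.ρ σ z := by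
    intro σ hσ
    have hex : ∃ τ, τ ∈ C.S ∧ C.ρ τ v = C.ρ σ v := ⟨σ, hσ, rfl⟩
    have := hex.choose_spec
    have heq : hex.choose = σ := C.free' this.1 hσ v this.2
    simp only [hg', dif_pos hex, heq]
  have hfd : ∀ x ∈ p.dom, f' x = p.f x := by
    intro x hx
    have : ¬∃ σ, σ ∈ C.S ∧ C.ρ σ z = x := by
      rintro ⟨σ, hσ, rfl⟩
      exact horbd _ (C.rho_mem_orb hσ z) hx
    simp only [hf', dif_neg this]
  have hgr : ∀ y ∈ p.ran, g' y = p.g y := by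
    intro y hy
    have : ¬∃ σ, σ ∈ C.S ∧ C.ρ σ v = y := by
      rintro ⟨σ, hσ, rfl⟩
      exact horbr _ (C.rho_mem_orb hσ v) hy
    simp only [hg', dif_neg this]
  -- adjacency, mixed case
  have hadjmix : ∀ σ ∈ C.S, ∀ w ∈ p.dom,
      (R.Adj (C.ρ σ v) (p.f w) ↔ R.Adj (C.ρ σ z) w) := by
    intro σ hσ w hw
    rw [C.rho_adj_left σ v (p.f w), C.rho_adj_left σ z w,
      ← p.equi σ⁻¹ (inv_mem hσ) w hw]
    exact hmatch _ (p.domS σ⁻¹ (inv_mem hσ) w hw)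
  have hadjnew : ∀ σ ∈ C.S, ∀ τ ∈ C.S, ∀ x : V, ¬ R.Adj (C.ρ σ x) (C.ρ τ x) := by
    intro σ hσ τ hτ x h
    rw [C.rho_adj_left σ x (C.ρ τ x), C.rho_mul_apply] at h
    rw [R.adj_comm] at h
    exact C.hns (σ⁻¹ * τ) x h
  refine ⟨⟨p.dom ∪ C.orb z, p.ran ∪ C.orb v, f', g', ?_, ?_, ?_, ?_, ?_, ?_, ?_⟩,
    ⟨Finset.subset_union_left, fun x hx => hfd x hx⟩, rfl, rfl, by
      have := hfz 1 (one_mem _); simpa using this⟩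
  · -- mapsf
    intro x hx
    rcases Finset.mem_union.1 hx with hx | hx
    · rw [hfd x hx]; exact Finset.mem_union_left _ (p.mapsf x hx)
    · obtain ⟨σ, hσ, rfl⟩ := (C.mem_orb).1 hx
      rw [hfz σ hσ]; exact Finset.mem_union_right _ (C.rho_mem_orb hσ v)
  · -- mapsg
    intro y hy
    rcases Finset.mem_union.1 hy with hy | hy
    · rw [hgr y hy]; exact Finset.mem_union_left _ (p.mapsg y hy)
    · obtain ⟨σ, hσ, rfl⟩ := (C.mem_orb).1 hy
      rw [hgv σ hσ]; exact Finset.mem_union_right _ (C.rho_mem_orb hσ z)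
  · -- lg
    intro x hx
    rcases Finset.mem_union.1 hx with hx | hx
    · rw [hfd x hx, hgr _ (p.mapsf x hx), p.lg x hx]
    · obtain ⟨σ, hσ, rfl⟩ := (C.mem_orb).1 hx
      rw [hfz σ hσ, hgv σ hσ]
  · -- rg
    intro y hy
    rcases Finset.mem_union.1 hy with hy | hy
    · rw [hgr y hy, hfd _ (p.mapsg y hy), p.rg y hy]
    · obtain ⟨σ, hσ, rfl⟩ := (C.mem_orb).1 hy
      rw [hgv σ hσ, hfz σ hσ]
  · -- adj
    intro u hu w hw
    rcases Finset.mem_union.1 hu with hu | hu <;> rcases Finset.mem_union.1 hw with hw | hw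
    · rw [hfd u hu, hfd w hw]; exact p.adj u hu w hw
    · obtain ⟨σ, hσ, rfl⟩ := (C.mem_orb).1 hw
      rw [hfd u hu, hfz σ hσ, R.adj_comm, hadjmix σ hσ u hu, R.adj_comm]
    · obtain ⟨σ, hσ, rfl⟩ := (C.mem_orb).1 hu
      rw [hfd w hw, hfz σ hσ, hadjmix σ hσ w hw]
    · obtain ⟨σ, hσ, rfl⟩ := (C.mem_orb).1 hu
      obtain ⟨τ, hτ, rfl⟩ := (C.mem_orb).1 hw
      rw [hfz σ hσ, hfz τ hτ]
      constructor
      · intro h; exact absurd h (hadjnew σ hσ τ hτ v)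
      · intro h; exact absurd h (hadjnew σ hσ τ hτ z)
  · -- domS
    intro σ hσ x hx
    rcases Finset.mem_union.1 hx with hx | hx
    · exact Finset.mem_union_left _ (p.domS σ hσ x hx)
    · obtain ⟨τ, hτ, rfl⟩ := (C.mem_orb).1 hx
      rw [C.rho_mul_apply]
      exact Finset.mem_union_right _ (C.rho_mem_orb (mul_mem hσ hτ) z)
  · -- equi
    intro σ hσ x hx
    rcases Finset.mem_union.1 hx with hx | hx
    · rw [hfd x hx, hfd _ (p.domS σ hσ x hx), p.equi σ hσ x hx]
    · obtain ⟨τ, hτ, rfl⟩ := (C.mem_orb).1 hx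
      rw [hfz τ hτ, C.rho_mul_apply, hfz (σ * τ) (mul_mem hσ hτ), ← C.rho_mul_apply]

end PIso
end AD

namespace AD
attribute [local instance] Classical.propDecidable
open Function Set
variable {Γ : Type} [Group Γ] {V : Type} {R : SimpleGraph V}
namespace PIso
variable {C : Ctx Γ V R}

/-- symmetric version of `extend_orbit`: adding a fresh preimage orbit -/
lemma extend_orbit_ran (p : PIso C) {u m : V} (hu : u ∉ p.dom) (hm : m ∉ p.ran)
    (hmatch : ∀ w ∈ p.ran, R.Adj u (p.g w) ↔ R.Adj m w) :
    ∃ q : PIso C, p.Le q ∧ q.dom = p.dom ∪ C.orb u ∧ q.ran = p.ran ∪ C.orb m ∧ q.f u = m := by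
  obtain ⟨q', hle, hdom, hran, hfm⟩ := p.symm.extend_orbit (z := m) (v := u) hm hu hmatch
  refine ⟨q'.symm, hle.symm, by simpa using hran, by simpa using hdom, ?_⟩
  have hmd : m ∈ q'.dom := by rw [hdom]; exact Finset.mem_union_right _ (C.self_mem_orb m)
  have : q'.g (q'.f m) = m := q'.lg m hmd
  rw [hfm] at this
  exact this

/-- extend the domain by an arbitrary point, using property (R) -/
lemma extend_dom (p : PIso C) (x : V) : ∃ q : PIso C, p.Le q ∧ x ∈ q.dom := by
  by_cases hx : x ∈ p.dom
  · exact ⟨p, Le.refl p, hx⟩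
  · set U : Finset V := (p.dom.filter (fun w => R.Adj x w)).image p.f with hU
    set W : Finset V := p.ran \ U with hW
    obtain ⟨v, hvU, hvW, hadj, hnadj⟩ := C.hR U W (Finset.sdiff_disjoint).symm
    have hUr : U ⊆ p.ran := by
      intro y hy
      obtain ⟨w, hw, rfl⟩ := Finset.mem_image.1 hy
      exact p.mapsf w (Finset.mem_of_mem_filter w hw)
    have hv : v ∉ p.ran := by
      intro hvr
      by_cases h : v ∈ U
      · exact hvU h
      · exact hvW (Finset.mem_sdiff.2 ⟨hvr, h⟩)
    have hmatch : ∀ w ∈ p.dom, R.Adj v (p.f w) ↔ R.Adj x w := by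
      intro w hw
      constructor
      · intro h
        by_contra hxw
        have hfwU : p.f w ∉ U := by
          intro hmem
          obtain ⟨w', hw', heq⟩ := Finset.mem_image.1 hmem
          have : w' = w := p.injOn (Finset.mem_of_mem_filter w' hw') hw heq
          exact hxw (this ▸ (Finset.mem_filter.1 hw').2)
        exact hnadj _ (Finset.mem_sdiff.2 ⟨p.mapsf w hw, hfwU⟩) h
      · intro h
        exact hadj _ (Finset.mem_image_of_mem p.f (Finset.mem_filter.2 ⟨hw, h⟩))
    obtain ⟨q, hle, hdom, -, -⟩ := p.extend_orbit hx hv hmatch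
    exact ⟨q, hle, by rw [hdom]; exact Finset.mem_union_right _ (C.self_mem_orb x)⟩

/-- extend the range by an arbitrary point -/
lemma extend_ran (p : PIso C) (y : V) : ∃ q : PIso C, p.Le q ∧ y ∈ q.ran := by
  obtain ⟨q', hle, hy⟩ := p.symm.extend_dom y
  exact ⟨q'.symm, hle.symm, hy⟩

lemma extend_finset (p : PIso C) (A : Finset V) : ∃ q : PIso C, p.Le q ∧ A ⊆ q.dom := by
  classical
  induction A using Finset.induction_on with
  | empty => exact ⟨p, Le.refl p, Finset.empty_subset _⟩
  | @insert _ _ hx ih =>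
    obtain ⟨q, hle, hsub⟩ := ih
    obtain ⟨q', hle', hmem⟩ := q.extend_dom _
    exact ⟨q', hle.trans hle', Finset.insert_subset hmem (hsub.trans hle'.1)⟩

end PIso
end AD

namespace AD
attribute [local instance] Classical.propDecidable
open Function Set
variable {Γ : Type} [Group Γ] {V : Type} {R : SimpleGraph V}

namespace Ctx
variable (C : Ctx Γ V R)

lemma nadj_orbit (a b : Γ) (x : V) : ¬ R.Adj (C.ρ a x) (C.ρ b x) := by
  intro h
  rw [C.rho_adj_left, C.rho_mul_apply, R.adj_comm] at h
  exact C.hns _ x h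

end Ctx

namespace PIso
variable {C : Ctx Γ V R}

/-- `z` is fresh for `p`: outside the domain, with its whole `S`-orbit
non-adjacent to the domain. -/
def Fresh (p : PIso C) (z : V) : Prop :=
  z ∉ p.dom ∧ ∀ σ ∈ C.S, ∀ w ∈ p.dom, ¬ R.Adj (C.ρ σ z) w

lemma Fresh.nadj {p : PIso C} {z : V} (h : p.Fresh z) : ∀ w ∈ p.dom, ¬ R.Adj z w := by
  intro w hw
  have := h.2 1 (one_mem _) w hw
  simpa using this

/-- base lemma: there is a vertex `y` such that `ρ c₀ y` is fresh for `p` -/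
lemma base (p : PIso C) (c₀ : Γ) : ∃ y : V, p.Fresh (C.ρ c₀ y) := by
  obtain ⟨y, hyF, hynadj, -⟩ :=
    C.hF ∅ (p.dom.image (fun w => C.ρ c₀⁻¹ w)) (Finset.notMem_empty 1)
  refine ⟨y, ?_, ?_⟩
  · intro hmem
    apply hyF
    have h : y = C.ρ c₀⁻¹ (C.ρ c₀ y) := (C.rho_inv_apply c₀ y).symm
    rw [h]
    exact Finset.mem_image_of_mem _ hmem
  · intro σ hσ w hw
    rw [C.rho_mul_apply, C.rho_adj_left]
    apply hynadj
    have : (σ * c₀)⁻¹ = c₀⁻¹ * σ⁻¹ := by group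
    rw [this, ← C.rho_mul_apply]
    exact Finset.mem_image_of_mem _ (p.domS σ⁻¹ (inv_mem hσ) w hw)

end PIso
end AD

namespace AD
attribute [local instance] Classical.propDecidable
open Function Set
variable {Γ : Type} [Group Γ] {V : Type} {R : SimpleGraph V}
namespace PIso
variable {C : Ctx Γ V R}

/-- The key step: starting from a fresh point `z`, we can extend the partial isomorphism
so that the value of `ρ c ∘ β⁻¹ ∘ ρ b ∘ β` at `z` is pinned, avoids a given finite set,
and is again fresh (if `c ∉ S`). -/
lemma step (q : PIso C) {z : V} (hz : q.Fresh z) (b : Γ) (hb : b ∉ C.S) (c : Γ)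
    (B : Finset V) :
    ∃ q' : PIso C, ∃ u v : V, q.Le q' ∧ z ∈ q'.dom ∧ u ∈ q'.dom ∧
      q'.f z = v ∧ q'.f u = C.ρ b v ∧ C.ρ c u ∉ B ∧ (c ∉ C.S → q'.Fresh (C.ρ c u)) := by
  -- choose the image v of z
  set Sv : Finset Γ := C.Sfin.image (fun σ => σ⁻¹ * b) with hSv
  have h1Sv : (1 : Γ) ∉ Sv := by
    intro h
    obtain ⟨σ, hσ, heq⟩ := Finset.mem_image.1 h
    exact hb (by
      have : b = σ := by
        have := inv_mul_eq_one.mp heq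
        exact this.symm ▸ rfl
      exact this ▸ (C.hSfin σ).1 hσ)
  set Fv : Finset V := q.ran ∪ q.ran.image (fun w => C.ρ b⁻¹ w) with hFv
  obtain ⟨v, hvF, hvnadj, hvmov⟩ := C.hF Sv Fv h1Sv
  have hvran : v ∉ q.ran := fun h => hvF (Finset.mem_union_left _ h)
  have hmatch1 : ∀ w ∈ q.dom, R.Adj v (q.f w) ↔ R.Adj z w := by
    intro w hw
    exact iff_of_false (hvnadj _ (Finset.mem_union_left _ (q.mapsf w hw))) (hz.nadj w hw)
  obtain ⟨q₁, hle₁, hdom₁, hran₁, hfz⟩ := q.extend_orbit hz.1 hvran hmatch1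
  have hmran : C.ρ b v ∉ q₁.ran := by
    rw [hran₁]
    intro h
    rcases Finset.mem_union.1 h with h | h
    · apply hvF
      apply Finset.mem_union_right
      have : v = C.ρ b⁻¹ (C.ρ b v) := (C.rho_inv_apply b v).symm
      rw [this]
      exact Finset.mem_image_of_mem _ h
    · obtain ⟨σ, hσ, heq⟩ := (C.mem_orb).1 h
      have hmov : C.ρ (σ⁻¹ * b) v = v := by
        rw [← C.rho_mul_apply, ← heq, C.rho_inv_apply]
      exact hvmov _ (Finset.mem_image_of_mem _ ((C.hSfin σ).2 hσ)) hmov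
  -- choose the preimage u of m
  set Su : Finset Γ := if c ∈ C.S then ∅ else C.Sfin.image (fun σ => σ⁻¹ * c) with hSu
  have h1Su : (1 : Γ) ∉ Su := by
    rw [hSu]
    split
    · exact Finset.notMem_empty 1
    · intro h
      obtain ⟨σ, hσ, heq⟩ := Finset.mem_image.1 h
      next hcS =>
      exact hcS (by
        have : c = σ := (inv_mul_eq_one.mp heq).symm
        exact this ▸ (C.hSfin σ).1 hσ)
  set Fu : Finset V := q₁.dom ∪ q₁.dom.image (fun w => C.ρ c⁻¹ w)
      ∪ B.image (fun w => C.ρ c⁻¹ w) with hFu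
  obtain ⟨u, huF, hunadj, humov⟩ := C.hF Su Fu h1Su
  have hu : u ∉ q₁.dom := fun h =>
    huF (Finset.mem_union_left _ (Finset.mem_union_left _ h))
  have hmatch2 : ∀ w ∈ q₁.ran, (R.Adj u (q₁.g w) ↔ R.Adj (C.ρ b v) w) := by
    intro w hw
    refine iff_of_false
      (hunadj _ (Finset.mem_union_left _ (Finset.mem_union_left _ (q₁.mapsg w hw)))) ?_
    rw [hran₁] at hw
    rcases Finset.mem_union.1 hw with h | h
    · rw [C.rho_adj_left]
      exact hvnadj _ (Finset.mem_union_right _ (Finset.mem_image_of_mem _ h))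
    · obtain ⟨σ, hσ, rfl⟩ := (C.mem_orb).1 h
      exact C.nadj_orbit b σ v
  obtain ⟨q₂, hle₂, hdom₂, hran₂, hfu⟩ := q₁.extend_orbit_ran hu hmran hmatch2
  have hzdom : z ∈ q₂.dom := by
    rw [hdom₂, hdom₁]
    exact Finset.mem_union_left _ (Finset.mem_union_right _ (C.self_mem_orb z))
  have hudom : u ∈ q₂.dom := by
    rw [hdom₂]
    exact Finset.mem_union_right _ (C.self_mem_orb u)
  refine ⟨q₂, u, v, hle₁.trans hle₂, hzdom, hudom, ?_, hfu, ?_, ?_⟩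
  · rw [hle₂.2 z (by rw [hdom₁]; exact Finset.mem_union_right _ (C.self_mem_orb z)), hfz]
  · intro hcuB
    apply huF
    apply Finset.mem_union_right
    have : u = C.ρ c⁻¹ (C.ρ c u) := (C.rho_inv_apply c u).symm
    rw [this]
    exact Finset.mem_image_of_mem _ hcuB
  · intro hcS
    constructor
    · rw [hdom₂]
      intro h
      rcases Finset.mem_union.1 h with h | h
      · apply huF
        apply Finset.mem_union_left
        apply Finset.mem_union_right
        have : u = C.ρ c⁻¹ (C.ρ c u) := (C.rho_inv_apply c u).symm
        rw [this]
        exact Finset.mem_image_of_mem _ h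
      · obtain ⟨σ, hσ, heq⟩ := (C.mem_orb).1 h
        have hmov : C.ρ (σ⁻¹ * c) u = u := by
          rw [← C.rho_mul_apply, ← heq, C.rho_inv_apply]
        apply humov _ ?_ hmov
        rw [hSu, if_neg hcS]
        exact Finset.mem_image_of_mem _ ((C.hSfin σ).2 hσ)
    · intro σ hσ w hw
      rw [hdom₂] at hw
      rcases Finset.mem_union.1 hw with h | h
      · rw [C.rho_mul_apply, C.rho_adj_left]
        apply hunadj
        apply Finset.mem_union_left
        apply Finset.mem_union_right
        have hinv : (σ * c)⁻¹ = c⁻¹ * σ⁻¹ := by group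
        rw [hinv, ← C.rho_mul_apply]
        exact Finset.mem_image_of_mem _ (q₁.domS σ⁻¹ (inv_mem hσ) w h)
      · obtain ⟨τ, hτ, rfl⟩ := (C.mem_orb).1 h
        rw [C.rho_mul_apply]
        exact C.nadj_orbit (σ * c) τ u

end PIso
end AD

namespace AD
attribute [local instance] Classical.propDecidable
open Function Set
variable {Γ : Type} [Group Γ] {V : Type} {R : SimpleGraph V}
namespace Ctx
variable (C : Ctx Γ V R)

/-- `Γ` is generated by `Γ₁ ∪ Γ₂` (from the universal property). -/
lemma mem_closure_union (g : Γ) : g ∈ Subgroup.closure ((C.Γ₁ : Set Γ) ∪ (C.Γ₂ : Set Γ)) := by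
  set K := Subgroup.closure ((C.Γ₁ : Set Γ) ∪ (C.Γ₂ : Set Γ)) with hK
  have hK1 : C.Γ₁ ≤ K := fun x hx => Subgroup.subset_closure (Or.inl hx)
  have hK2 : C.Γ₂ ≤ K := fun x hx => Subgroup.subset_closure (Or.inr hx)
  obtain ⟨f, ⟨hfa, hfb⟩, -⟩ :=
    C.hamalg K (Subgroup.inclusion hK1) (Subgroup.inclusion hK2) (fun x hx => rfl)
  obtain ⟨F, hF1, hFuniq⟩ :=
    C.hamalg Γ C.Γ₁.subtype C.Γ₂.subtype (fun x hx => rfl)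
  have hid : MonoidHom.id Γ = K.subtype.comp f := by
    have h1 : MonoidHom.id Γ = F := hFuniq (MonoidHom.id Γ) ⟨fun a => rfl, fun b => rfl⟩
    have h2 : K.subtype.comp f = F := hFuniq _ ⟨fun a => by simp [hfa a], fun b => by simp [hfb b]⟩
    rw [h1, h2]
  have : g = ((f g : K) : Γ) := by
    have := congrArg (fun h => h g) hid
    simpa using this
  rw [this]
  exact (f g).2

end Ctx
end AD

namespace AD
attribute [local instance] Classical.propDecidable
open Function Set
variable {Γ : Type} [Group Γ] {V : Type} {R : SimpleGraph V}

/-- product of a chunk list (outermost first) applied to an innermost element `c₀` -/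
def chunkProd (ps : List (Γ × Γ)) (c₀ : Γ) : Γ :=
  ps.foldr (fun pr acc => pr.1 * pr.2 * acc) c₀

@[simp] lemma chunkProd_nil (c₀ : Γ) : chunkProd ([] : List (Γ × Γ)) c₀ = c₀ := rfl
@[simp] lemma chunkProd_cons (pr : Γ × Γ) (tl : List (Γ × Γ)) (c₀ : Γ) :
    chunkProd (pr :: tl) c₀ = pr.1 * pr.2 * chunkProd tl c₀ := rfl

namespace Ctx
variable (C : Ctx Γ V R)

/-- validity of a chunk list: all first components in `Γ₁`, all second components in
`Γ₂ \ S`, and the first components of all chunks except the outermost one outside `S`. -/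
def ChunkOK (ps : List (Γ × Γ)) : Prop :=
  (∀ pr ∈ ps, pr.1 ∈ C.Γ₁ ∧ pr.2 ∈ C.Γ₂ ∧ pr.2 ∉ C.S) ∧ (∀ pr ∈ ps.tail, pr.1 ∉ C.S)

/-- normal-form trichotomy for elements of `Γ` -/
def FormOK (g : Γ) : Prop :=
  g ∈ C.Γ₁ ∨ g ∈ C.Γ₂ ∨
    ∃ c₀ ps, c₀ ∈ C.Γ₁ ∧ ps ≠ [] ∧ C.ChunkOK ps ∧ chunkProd ps c₀ = g

lemma formOK_lmul {t : Γ} (ht : C.FormOK t) {x : Γ} (hx : x ∈ C.Γ₁ ∨ x ∈ C.Γ₂) :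
    C.FormOK (x * t) := by
  by_cases hx1 : x ∈ C.Γ₁
  · -- multiplying by a Γ₁ element
    rcases ht with ht | ht | ⟨c₀, ps, hc₀, hne, hOK, hprod⟩
    · exact Or.inl (mul_mem hx1 ht)
    · by_cases hxS : x ∈ C.S
      · exact Or.inr (Or.inl (mul_mem (C.hS₂ hxS) ht))
      · by_cases htS : t ∈ C.S
        · exact Or.inl (mul_mem hx1 (C.hS₁ htS))
        · exact Or.inr (Or.inr ⟨1, [(x, t)], one_mem _, by simp, ⟨by
            rintro pr hpr
            simp only [List.mem_singleton] at hpr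
            subst hpr
            exact ⟨hx1, ht, htS⟩, by simp⟩, by simp [chunkProd]⟩)
    · -- chunk: absorb into head
      obtain ⟨⟨c₁, b₁⟩, rest, rfl⟩ := List.exists_cons_of_ne_nil hne
      refine Or.inr (Or.inr ⟨c₀, (x * c₁, b₁) :: rest, hc₀, by simp, ⟨?_, ?_⟩, ?_⟩)
      · rintro pr hpr
        rcases List.mem_cons.1 hpr with rfl | hpr
        · exact ⟨mul_mem hx1 (hOK.1 _ (List.mem_cons_self)).1,
            (hOK.1 _ (List.mem_cons_self)).2.1, (hOK.1 _ (List.mem_cons_self)).2.2⟩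
        · exact hOK.1 _ (List.mem_cons_of_mem _ hpr)
      · exact hOK.2
      · rw [← hprod]; simp [chunkProd, mul_assoc]
  · -- x ∈ Γ₂ \ Γ₁ (hence x ∉ S)
    have hx2 : x ∈ C.Γ₂ := hx.resolve_left hx1
    have hxS : x ∉ C.S := fun h => hx1 (C.hS₁ h)
    rcases ht with ht | ht | ⟨c₀, ps, hc₀, hne, hOK, hprod⟩
    · by_cases htS : t ∈ C.S
      · exact Or.inr (Or.inl (mul_mem hx2 (C.hS₂ htS)))
      · exact Or.inr (Or.inr ⟨t, [(1, x)], ht, by simp, ⟨by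
          rintro pr hpr
          simp only [List.mem_singleton] at hpr
          subst hpr
          exact ⟨one_mem _, hx2, hxS⟩, by simp⟩, by simp [chunkProd]⟩)
    · exact Or.inr (Or.inl (mul_mem hx2 ht))
    · obtain ⟨⟨c₁, b₁⟩, rest, rfl⟩ := List.exists_cons_of_ne_nil hne
      have hc₁ : c₁ ∈ C.Γ₁ := (hOK.1 _ (List.mem_cons_self)).1
      have hb₁ : b₁ ∈ C.Γ₂ := (hOK.1 _ (List.mem_cons_self)).2.1
      have hb₁S : b₁ ∉ C.S := (hOK.1 _ (List.mem_cons_self)).2.2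
      by_cases hc₁S : c₁ ∈ C.S
      · -- absorb x * c₁ * b₁ into a single Γ₂ element
        set b' := x * c₁ * b₁ with hb'
        have hb'2 : b' ∈ C.Γ₂ := mul_mem (mul_mem hx2 (C.hS₂ hc₁S)) hb₁
        by_cases hb'S : b' ∈ C.S
        · -- b' ∈ S, merge with next chunk (or finish)
          match rest, hOK, hprod with
          | [], hOK, hprod =>
            refine Or.inl ?_
            have : x * t = b' * c₀ := by rw [← hprod]; simp [chunkProd, hb', mul_assoc]
            rw [this]
            exact mul_mem (C.hS₁ hb'S) hc₀
          | (c₂, b₂) :: rest', hOK, hprod =>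
            refine Or.inr (Or.inr ⟨c₀, (b' * c₂, b₂) :: rest', hc₀, by simp, ⟨?_, ?_⟩, ?_⟩)
            · rintro pr hpr
              rcases List.mem_cons.1 hpr with rfl | hpr
              · have h2 := hOK.1 (c₂, b₂) (List.mem_cons_of_mem _ (List.mem_cons_self))
                exact ⟨mul_mem (C.hS₁ hb'S) h2.1, h2.2.1, h2.2.2⟩
              · exact hOK.1 _ (List.mem_cons_of_mem _ (List.mem_cons_of_mem _ hpr))
            · intro pr hpr
              exact hOK.2 pr (by
                simp only [List.tail_cons] at hpr ⊢
                exact List.mem_cons_of_mem _ hpr)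
            · rw [← hprod]; simp [chunkProd, hb', mul_assoc]
        · -- b' ∉ S: replace head by (1, b')
          refine Or.inr (Or.inr ⟨c₀, (1, b') :: rest, hc₀, by simp, ⟨?_, ?_⟩, ?_⟩)
          · rintro pr hpr
            rcases List.mem_cons.1 hpr with rfl | hpr
            · exact ⟨one_mem _, hb'2, hb'S⟩
            · exact hOK.1 _ (List.mem_cons_of_mem _ hpr)
          · exact hOK.2
          · rw [← hprod]; simp [chunkProd, hb', mul_assoc]
      · -- c₁ ∉ S: prepend a new chunk (1, x)
        refine Or.inr (Or.inr ⟨c₀, (1, x) :: (c₁, b₁) :: rest, hc₀, by simp, ⟨?_, ?_⟩, ?_⟩)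
        · rintro pr hpr
          rcases List.mem_cons.1 hpr with rfl | hpr
          · exact ⟨one_mem _, hx2, hxS⟩
          · exact hOK.1 _ hpr
        · intro pr hpr
          simp only [List.tail_cons] at hpr
          rcases List.mem_cons.1 hpr with rfl | hpr
          · exact hc₁S
          · exact hOK.2 _ hpr
        · rw [← hprod]; simp [chunkProd, mul_assoc]

lemma exists_word (g : Γ) :
    ∃ l : List Γ, (∀ x ∈ l, x ∈ C.Γ₁ ∨ x ∈ C.Γ₂) ∧ l.prod = g := by
  have hg := C.mem_closure_union g
  induction hg using Subgroup.closure_induction with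
  | mem x hx => exact ⟨[x], by simpa using hx, by simp⟩
  | one => exact ⟨[], by simp, by simp⟩
  | mul x y hx hy ihx ihy =>
    obtain ⟨l₁, hl₁, rfl⟩ := ihx
    obtain ⟨l₂, hl₂, rfl⟩ := ihy
    exact ⟨l₁ ++ l₂, by
      intro a ha
      rcases List.mem_append.1 ha with h | h
      exacts [hl₁ a h, hl₂ a h], by simp⟩
  | inv x hx ih =>
    obtain ⟨l, hl, rfl⟩ := ih
    refine ⟨(l.map fun a => a⁻¹).reverse, ?_, (List.prod_inv_reverse l).symm⟩
    intro a ha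
    rw [List.mem_reverse, List.mem_map] at ha
    obtain ⟨b, hb, rfl⟩ := ha
    rcases hl b hb with h | h
    exacts [Or.inl (inv_mem h), Or.inr (inv_mem h)]

lemma formOK_all (g : Γ) : C.FormOK g := by
  obtain ⟨l, hl, rfl⟩ := C.exists_word g
  induction l with
  | nil => exact Or.inl (by simpa using one_mem C.Γ₁)
  | cons x xs ih =>
    rw [List.prod_cons]
    exact C.formOK_lmul (ih (fun a ha => hl a (List.mem_cons_of_mem _ ha)))
      (hl x (List.mem_cons_self))

end Ctx
end AD

namespace AD
attribute [local instance] Classical.propDecidable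
open Function Set
variable {Γ : Type} [Group Γ] {V : Type} {R : SimpleGraph V}

/-- `β` extends the partial isomorphism `p` -/
def Ext {C : Ctx Γ V R} (β : R ≃g R) (p : PIso C) : Prop := ∀ x ∈ p.dom, β x = p.f x

lemma Ext.mono {C : Ctx Γ V R} {β : R ≃g R} {p q : PIso C} (hle : p.Le q)
    (h : Ext β q) : Ext β p :=
  fun x hx => by rw [h x (hle.1 hx), hle.2 x hx]

lemma Ext.symm_apply {C : Ctx Γ V R} {β : R ≃g R} {p : PIso C} (h : Ext β p) {x : V}
    (hx : x ∈ p.dom) : β.symm (p.f x) = x := by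
  rw [← h x hx]
  exact β.toEquiv.symm_apply_apply x

/-- evaluation of a chunk word under `β`: each chunk `(c, b)` acts as
`ρ c ∘ β⁻¹ ∘ ρ b ∘ β` -/
def chEval (C : Ctx Γ V R) (β : R ≃g R) : List (Γ × Γ) → V → V
  | [], x => x
  | pr :: tl, x => C.ρ pr.1 (β.symm (C.ρ pr.2 (β (chEval C β tl x))))

namespace PIso
variable {C : Ctx Γ V R}

lemma step_eval {q' : PIso C} {β : R ≃g R} (b c : Γ) (hext : Ext β q') {z u v : V}
    (hzdom : z ∈ q'.dom) (hudom : u ∈ q'.dom) (hfz : q'.f z = v)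
    (hfu : q'.f u = C.ρ b v) : C.ρ c (β.symm (C.ρ b (β z))) = C.ρ c u := by
  rw [hext z hzdom, hfz, ← hfu, Ext.symm_apply hext hudom]

lemma chain_aux (ps : List (Γ × Γ)) (hne : ps ≠ [])
    (hb : ∀ pr ∈ ps, pr.2 ∉ C.S) (hc : ∀ pr ∈ ps, pr.1 ∉ C.S)
    (q : PIso C) (z : V) (hz : q.Fresh z) (B : Finset V) :
    ∃ q' : PIso C, q.Le q' ∧ ∃ z', z' ∉ B ∧ q'.Fresh z' ∧
      ∀ β : R ≃g R, Ext β q' → chEval C β ps z = z' := by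
  induction ps generalizing q z with
  | nil => exact absurd rfl hne
  | cons pr tl ih =>
    rcases eq_or_ne tl [] with rfl | htl
    · obtain ⟨q', u, v, hle, hzd, hud, hfz, hfu, hB, hfr⟩ :=
        q.step hz pr.2 (hb pr (List.mem_cons_self)) pr.1 B
      refine ⟨q', hle, C.ρ pr.1 u, hB, hfr (hc pr (List.mem_cons_self)), ?_⟩
      intro β hext
      show C.ρ pr.1 (β.symm (C.ρ pr.2 (β z))) = _
      exact step_eval pr.2 pr.1 hext hzd hud hfz hfu
    · obtain ⟨q₁, hle₁, z₁, -, hfr₁, heval₁⟩ :=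
        ih htl (fun x hx => hb x (List.mem_cons_of_mem _ hx))
          (fun x hx => hc x (List.mem_cons_of_mem _ hx)) q z hz
      obtain ⟨q₂, u, v, hle₂, hzd, hud, hfz, hfu, hB, hfr⟩ :=
        q₁.step hfr₁ pr.2 (hb pr (List.mem_cons_self)) pr.1 B
      refine ⟨q₂, hle₁.trans hle₂, C.ρ pr.1 u, hB,
        hfr (hc pr (List.mem_cons_self)), ?_⟩
      intro β hext
      show C.ρ pr.1 (β.symm (C.ρ pr.2 (β (chEval C β tl z)))) = _
      rw [heval₁ β (Ext.mono hle₂ hext)]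
      exact step_eval pr.2 pr.1 hext hzd hud hfz hfu

lemma chain (ps : List (Γ × Γ)) (hne : ps ≠ []) (hOK : C.ChunkOK ps)
    (q : PIso C) (z : V) (hz : q.Fresh z) (B : Finset V) :
    ∃ q' : PIso C, q.Le q' ∧ ∃ z', z' ∉ B ∧
      ∀ β : R ≃g R, Ext β q' → chEval C β ps z = z' := by
  obtain ⟨pr, tl, rfl⟩ := List.exists_cons_of_ne_nil hne
  rcases eq_or_ne tl [] with rfl | htl
  · obtain ⟨q', u, v, hle, hzd, hud, hfz, hfu, hB, -⟩ :=
      q.step hz pr.2 (hOK.1 pr (List.mem_cons_self)).2.2 pr.1 B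
    refine ⟨q', hle, C.ρ pr.1 u, hB, ?_⟩
    intro β hext
    show C.ρ pr.1 (β.symm (C.ρ pr.2 (β z))) = _
    exact step_eval pr.2 pr.1 hext hzd hud hfz hfu
  · obtain ⟨q₁, hle₁, z₁, -, hfr₁, heval₁⟩ :=
      chain_aux tl htl (fun x hx => (hOK.1 x (List.mem_cons_of_mem _ hx)).2.2)
        (fun x hx => hOK.2 x hx) q z hz ∅
    obtain ⟨q₂, u, v, hle₂, hzd, hud, hfz, hfu, hB, -⟩ :=
      q₁.step hfr₁ pr.2 (hOK.1 pr (List.mem_cons_self)).2.2 pr.1 B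
    refine ⟨q₂, hle₁.trans hle₂, C.ρ pr.1 u, hB, ?_⟩
    intro β hext
    show C.ρ pr.1 (β.symm (C.ρ pr.2 (β (chEval C β tl z)))) = _
    rw [heval₁ β (Ext.mono hle₂ hext)]
    exact step_eval pr.2 pr.1 hext hzd hud hfz hfu

/-- forcing lemma for faithfulness -/
lemma forces_faith (p : PIso C) (g : Γ) :
    ∃ q : PIso C, p.Le q ∧ (g ∈ C.Γ₁ ∨ g ∈ C.Γ₂ ∨
      ∃ c₀ ps y z', c₀ ∈ C.Γ₁ ∧ (∀ pr ∈ ps, pr.1 ∈ C.Γ₁ ∧ pr.2 ∈ C.Γ₂) ∧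
        chunkProd ps c₀ = g ∧ z' ≠ y ∧
        ∀ β : R ≃g R, Ext β q → chEval C β ps (C.ρ c₀ y) = z') := by
  rcases C.formOK_all g with hg | hg | ⟨c₀, ps, hc₀, hne, hOK, hprod⟩
  · exact ⟨p, Le.refl p, Or.inl hg⟩
  · exact ⟨p, Le.refl p, Or.inr (Or.inl hg)⟩
  · obtain ⟨y, hy⟩ := p.base c₀
    obtain ⟨q', hle, z', hz'B, heval⟩ := chain ps hne hOK p _ hy {y}
    refine ⟨q', hle, Or.inr (Or.inr ⟨c₀, ps, y, z', hc₀,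
      fun pr hpr => ⟨(hOK.1 pr hpr).1, (hOK.1 pr hpr).2.1⟩, hprod, ?_, heval⟩)⟩
    simpa using hz'B

end PIso
end AD

namespace AD
attribute [local instance] Classical.propDecidable
open Function Set
variable {Γ : Type} [Group Γ] {V : Type} {R : SimpleGraph V}
namespace PIso
variable {C : Ctx Γ V R}

/-- forcing lemma for homogeneity: any finite partial isomorphism of `R` is realised,
on a suitable extension, by a group element of the form `s⁻¹ t`. -/
lemma forces_homog (p : PIso C) (A : Finset V) (φ : V → V)
    (hinj : Set.InjOn φ (↑A : Set V))
    (hpat : ∀ u ∈ A, ∀ v ∈ A, R.Adj u v ↔ R.Adj (φ u) (φ v)) :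
    ∃ q : PIso C, p.Le q ∧ ∃ s t : Γ, s ∈ C.Γ₁ ∧ t ∈ C.Γ₂ ∧
      ∀ β : R ≃g R, Ext β q → ∀ a ∈ A, C.ρ s⁻¹ (β.symm (C.ρ t (β a))) = φ a := by
  classical
  obtain ⟨p₁, hle₁, hA⟩ := p.extend_finset A
  set F₁ : Finset V := p₁.dom ∪ A.image φ with hF₁
  obtain ⟨s, hs, hc1, hc2, hc3, hc4⟩ := C.hhcf₁ F₁
  obtain ⟨t, ht, hd1, hd2, hd3, hd4⟩ := C.hhcf₂ p₁.ran
  have hφF : ∀ a ∈ A, φ a ∈ F₁ := fun a ha =>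
    Finset.mem_union_right _ (Finset.mem_image_of_mem _ ha)
  have hfr : ∀ a ∈ A, p₁.f a ∈ p₁.ran := fun a ha => p₁.mapsf a (hA ha)
  have key : ∀ l : List V, l.Nodup → (∀ x ∈ l, x ∈ A) →
      ∃ q : PIso C, p₁.Le q ∧
        (∀ x ∈ l, C.ρ s (φ x) ∈ q.dom ∧ q.f (C.ρ s (φ x)) = C.ρ t (p₁.f x)) ∧
        (∀ w ∈ q.dom, w ∈ p₁.dom ∨ ∃ x ∈ l, w ∈ C.orb (C.ρ s (φ x))) ∧
        (∀ w ∈ q.ran, w ∈ p₁.ran ∨ ∃ x ∈ l, w ∈ C.orb (C.ρ t (p₁.f x))) := by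
    intro l
    induction l with
    | nil =>
      exact fun _ _ => ⟨p₁, Le.refl p₁, by simp, fun w hw => Or.inl hw, fun w hw => Or.inl hw⟩
    | cons a l' ih =>
      intro hnd hsub
      obtain ⟨q', hle', hvals', hdom', hran'⟩ := ih (List.Nodup.of_cons hnd)
        (fun x hx => hsub x (List.mem_cons_of_mem _ hx))
      have haA : a ∈ A := hsub a (List.mem_cons_self)
      have hanl : a ∉ l' := (List.nodup_cons.1 hnd).1
      have hxne : ∀ x ∈ l', φ a ≠ φ x := by
        intro x hx heq
        exact hanl (by
          have : a = x := hinj haA (hsub x (List.mem_cons_of_mem _ hx)) heq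
          exact this ▸ hx)
      have hz : C.ρ s (φ a) ∉ q'.dom := by
        intro h
        rcases hdom' _ h with h | ⟨x, hx, hmem⟩
        · exact hc1 (φ a) (hφF a haA) _ (Finset.mem_union_left _ h) 1 (one_mem _) (by simp)
        · obtain ⟨σ, hσ, heq⟩ := (C.mem_orb).1 hmem
          refine hc3 (φ a) (hφF a haA) (φ x) (hφF x (hsub x (List.mem_cons_of_mem _ hx)))
            (hxne x hx) 1 (one_mem _) σ hσ ?_
          rw [heq]; simp
      have hv : C.ρ t (p₁.f a) ∉ q'.ran := by
        intro h
        rcases hran' _ h with h | ⟨x, hx, hmem⟩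
        · exact hd1 (p₁.f a) (hfr a haA) _ h 1 (one_mem _) (by simp)
        · obtain ⟨σ, hσ, heq⟩ := (C.mem_orb).1 hmem
          refine hd3 (p₁.f a) (hfr a haA) (p₁.f x) (hfr x (hsub x (List.mem_cons_of_mem _ hx)))
            (fun he => hxne x hx (by
              have : a = x := p₁.injOn (hA haA) (hA (hsub x (List.mem_cons_of_mem _ hx))) he
              rw [this])) 1 (one_mem _) σ hσ ?_
          rw [heq]; simp
      have hmatch : ∀ w ∈ q'.dom, R.Adj (C.ρ t (p₁.f a)) (q'.f w) ↔ R.Adj (C.ρ s (φ a)) w := by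
        intro w hw
        rcases hdom' _ hw with h | ⟨x, hx, hmem⟩
        · rw [hle'.2 w h]
          exact iff_of_false (hd2 (p₁.f a) (hfr a haA) _ (p₁.mapsf w h))
            (hc2 (φ a) (hφF a haA) w (Finset.mem_union_left _ h))
        · obtain ⟨σ, hσ, heq⟩ := (C.mem_orb).1 hmem
          have hxA : x ∈ A := hsub x (List.mem_cons_of_mem _ hx)
          have hfw : q'.f w = C.ρ σ (C.ρ t (p₁.f x)) := by
            rw [← heq, q'.equi σ hσ _ (hvals' x hx).1, (hvals' x hx).2]
          rw [hfw, ← heq]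
          by_cases hσ1 : σ = 1
          · subst hσ1
            simp only [map_one]
            show R.Adj (C.ρ t (p₁.f a)) (C.ρ t (p₁.f x)) ↔ R.Adj (C.ρ s (φ a)) (C.ρ s (φ x))
            rw [C.rho_adj_iff, C.rho_adj_iff, p₁.adj a (hA haA) x (hA hxA)]
            exact hpat a haA x hxA
          · refine iff_of_false (fun hadj => ?_) (fun hadj => ?_)
            · rw [R.adj_comm] at hadj
              exact hd4 (p₁.f x) (hfr x hxA) (p₁.f a) (hfr a haA) σ hσ hσ1 hadj
            · rw [R.adj_comm] at hadj
              exact hc4 (φ x) (hφF x hxA) (φ a) (hφF a haA) σ hσ hσ1 hadj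
      obtain ⟨q, hleq, hdomq, hranq, hfa⟩ := q'.extend_orbit hz hv hmatch
      refine ⟨q, hle'.trans hleq, ?_, ?_, ?_⟩
      · intro x hx
        rcases List.mem_cons.1 hx with rfl | hx
        · exact ⟨by rw [hdomq]; exact Finset.mem_union_right _ (C.self_mem_orb _), hfa⟩
        · exact ⟨hleq.1 (hvals' x hx).1, by rw [hleq.2 _ (hvals' x hx).1]; exact (hvals' x hx).2⟩
      · intro w hw
        rw [hdomq] at hw
        rcases Finset.mem_union.1 hw with hw | hw
        · rcases hdom' w hw with h | ⟨x, hx, hmem⟩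
          · exact Or.inl h
          · exact Or.inr ⟨x, List.mem_cons_of_mem _ hx, hmem⟩
        · exact Or.inr ⟨a, List.mem_cons_self, hw⟩
      · intro w hw
        rw [hranq] at hw
        rcases Finset.mem_union.1 hw with hw | hw
        · rcases hran' w hw with h | ⟨x, hx, hmem⟩
          · exact Or.inl h
          · exact Or.inr ⟨x, List.mem_cons_of_mem _ hx, hmem⟩
        · exact Or.inr ⟨a, List.mem_cons_self, hw⟩
  obtain ⟨q, hleq, hvals, -, -⟩ := key A.toList A.nodup_toList (fun x hx => Finset.mem_toList.1 hx)
  refine ⟨q, hle₁.trans hleq, s, t, hs, ht, ?_⟩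
  intro β hext a ha
  obtain ⟨hmem, hval⟩ := hvals a (Finset.mem_toList.2 ha)
  have h1 : β a = p₁.f a := by
    rw [hext a (hleq.1 (hA ha)), hleq.2 a (hA ha)]
  rw [h1, ← hval, Ext.symm_apply hext hmem, C.rho_inv_apply]

end PIso
end AD

namespace AD
attribute [local instance] Classical.propDecidable
open Function Set
variable {Γ : Type} [Group Γ] {V : Type} {R : SimpleGraph V}

/-- the centraliser of `ρ(S)` in `Aut R` -/
abbrev ZT (C : Ctx Γ V R) : Type := {β : R ≃g R // ∀ σ ∈ C.S, β * C.ρ σ = C.ρ σ * β}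

namespace Ctx
variable (C : Ctx Γ V R)

/-- the restriction `ρ|Γ₁` -/
def rho₁ : C.Γ₁ →* (R ≃g R) := C.ρ.comp C.Γ₁.subtype

/-- the conjugated restriction `α⁻¹ ρ|Γ₂ α` -/
def rho₂ (α : ZT C) : C.Γ₂ →* (R ≃g R) :=
  ((MulAut.conj ((α : ZT C).1)⁻¹).toMonoidHom).comp (C.ρ.comp C.Γ₂.subtype)

lemma rho₂_apply (α : ZT C) (b : C.Γ₂) :
    C.rho₂ α b = (α.1)⁻¹ * C.ρ b * α.1 := by
  simp [rho₂, MulAut.conj_apply, mul_assoc]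

lemma rho_compat (α : ZT C) (x : Γ) (hx : x ∈ C.S) :
    C.rho₁ ⟨x, C.hS₁ hx⟩ = C.rho₂ α ⟨x, C.hS₂ hx⟩ := by
  rw [rho₂_apply]
  have h := α.2 x hx
  show C.ρ x = (α.1)⁻¹ * C.ρ x * α.1
  rw [mul_assoc, ← h, ← mul_assoc, inv_mul_cancel, one_mul]

/-- the deformed homomorphism `π_α` -/
noncomputable def Pi (α : ZT C) : Γ →* (R ≃g R) :=
  (C.hamalg (R ≃g R) C.rho₁ (C.rho₂ α) (C.rho_compat α)).choose

lemma Pi_spec (α : ZT C) :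
    ((∀ a : C.Γ₁, C.Pi α a = C.rho₁ a) ∧ (∀ b : C.Γ₂, C.Pi α b = C.rho₂ α b)) ∧
      ∀ π : Γ →* (R ≃g R),
        ((∀ a : C.Γ₁, π a = C.rho₁ a) ∧ (∀ b : C.Γ₂, π b = C.rho₂ α b)) → π = C.Pi α :=
  (C.hamalg (R ≃g R) C.rho₁ (C.rho₂ α) (C.rho_compat α)).choose_spec

lemma Pi_Γ₁ (α : ZT C) {a : Γ} (ha : a ∈ C.Γ₁) : C.Pi α a = C.ρ a :=
  (C.Pi_spec α).1.1 ⟨a, ha⟩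

lemma Pi_Γ₂ (α : ZT C) {b : Γ} (hb : b ∈ C.Γ₂) :
    C.Pi α b = (α.1)⁻¹ * C.ρ b * α.1 := by
  rw [(C.Pi_spec α).1.2 ⟨b, hb⟩, rho₂_apply]

lemma Pi_unique (α : ZT C) (π : Γ →* (R ≃g R))
    (h1 : ∀ a : C.Γ₁, π a = C.ρ a)
    (h2 : ∀ b : C.Γ₂, π b = (α.1)⁻¹ * C.ρ b * α.1) : π = C.Pi α :=
  (C.Pi_spec α).2 π ⟨fun a => h1 a, fun b => by rw [h2 b, rho₂_apply]⟩

lemma Pi_Γ₂_apply (α : ZT C) {b : Γ} (hb : b ∈ C.Γ₂) (x : V) :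
    C.Pi α b x = (α.1).symm (C.ρ b (α.1 x)) := by
  rw [C.Pi_Γ₂ α hb]; rfl

/-- evaluation of `π_α` on chunk normal forms -/
lemma Pi_chunk (α : ZT C) (ps : List (Γ × Γ))
    (hps : ∀ pr ∈ ps, pr.1 ∈ C.Γ₁ ∧ pr.2 ∈ C.Γ₂) {c₀ : Γ} (hc₀ : c₀ ∈ C.Γ₁) (y : V) :
    C.Pi α (chunkProd ps c₀) y = chEval C α.1 ps (C.ρ c₀ y) := by
  induction ps with
  | nil =>
    show C.Pi α c₀ y = C.ρ c₀ y
    rw [C.Pi_Γ₁ α hc₀]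
  | cons pr tl ih =>
    have h1 : C.Pi α (chunkProd (pr :: tl) c₀) y =
        C.Pi α pr.1 (C.Pi α pr.2 (C.Pi α (chunkProd tl c₀) y)) := by
      rw [chunkProd_cons, map_mul, map_mul]; rfl
    rw [h1, ih (fun x hx => hps x (List.mem_cons_of_mem _ hx)),
      C.Pi_Γ₁ α (hps pr (List.mem_cons_self)).1,
      C.Pi_Γ₂_apply α (hps pr (List.mem_cons_self)).2]
    rfl

/-- weakened normal form suitable for `Pi`-evaluation -/
lemma form' (g : Γ) : g ∈ C.Γ₁ ∨
    ∃ c₀ ps, c₀ ∈ C.Γ₁ ∧ (∀ pr ∈ ps, pr.1 ∈ C.Γ₁ ∧ pr.2 ∈ C.Γ₂) ∧ chunkProd ps c₀ = g := by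
  rcases C.formOK_all g with hg | hg | ⟨c₀, ps, hc₀, -, hOK, hprod⟩
  · exact Or.inl hg
  · exact Or.inr ⟨1, [(1, g)], one_mem _,
      by rintro pr hpr; simp only [List.mem_singleton] at hpr; subst hpr
         exact ⟨one_mem _, hg⟩, by simp [chunkProd]⟩
  · exact Or.inr ⟨c₀, ps, hc₀, fun pr hpr => ⟨(hOK.1 pr hpr).1, (hOK.1 pr hpr).2.1⟩, hprod⟩

end Ctx
end AD

namespace AD
attribute [local instance] Classical.propDecidable
open Function Set
variable {Γ : Type} [Group Γ] {V : Type} {R : SimpleGraph V}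

/-- validity of a list of pairs as a finite partial isomorphism -/
def LOK (R : SimpleGraph V) (L : List (V × V)) : Prop :=
  (∀ pr ∈ L, ∀ pr' ∈ L, pr.1 = pr'.1 ↔ pr.2 = pr'.2) ∧
  (∀ pr ∈ L, ∀ pr' ∈ L, (R.Adj pr.1 pr'.1 ↔ R.Adj pr.2 pr'.2))

/-- requirements to be satisfied along the construction -/
def Achieve (C : Ctx Γ V R) : (V ⊕ V) ⊕ (Γ ⊕ List (V × V)) → PIso C → Prop
  | .inl (.inl x), q => x ∈ q.dom
  | .inl (.inr y), q => y ∈ q.ran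
  | .inr (.inl g), q => g ∈ C.Γ₁ ∨ g ∈ C.Γ₂ ∨
      ∃ c₀ ps y z', c₀ ∈ C.Γ₁ ∧ (∀ pr ∈ ps, pr.1 ∈ C.Γ₁ ∧ pr.2 ∈ C.Γ₂) ∧
        chunkProd ps c₀ = g ∧ z' ≠ y ∧
        ∀ β : R ≃g R, Ext β q → chEval C β ps (C.ρ c₀ y) = z'
  | .inr (.inr L), q => LOK R L →
      ∃ s t : Γ, s ∈ C.Γ₁ ∧ t ∈ C.Γ₂ ∧
        ∀ β : R ≃g R, Ext β q → ∀ pr ∈ L, C.ρ s⁻¹ (β.symm (C.ρ t (β pr.1))) = pr.2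

lemma Achieve.mono {C : Ctx Γ V R} (task : (V ⊕ V) ⊕ (Γ ⊕ List (V × V)))
    {q q' : PIso C} (hle : q.Le q') (h : Achieve C task q) : Achieve C task q' := by
  rcases task with (x | y) | (g | L)
  · exact hle.1 h
  · exact hle.ran_subset h
  · rcases h with h | h | ⟨c₀, ps, y, z', h1, h2, h3, h4, h5⟩
    · exact Or.inl h
    · exact Or.inr (Or.inl h)
    · exact Or.inr (Or.inr ⟨c₀, ps, y, z', h1, h2, h3, h4,
        fun β hext => h5 β (Ext.mono hle hext)⟩)
  · intro hL
    obtain ⟨s, t, hs, ht, h5⟩ := h hL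
    exact ⟨s, t, hs, ht, fun β hext => h5 β (Ext.mono hle hext)⟩

lemma attain (C : Ctx Γ V R) (task : (V ⊕ V) ⊕ (Γ ⊕ List (V × V))) (p : PIso C) :
    ∃ q : PIso C, p.Le q ∧ Achieve C task q := by
  rcases task with (x | y) | (g | L)
  · obtain ⟨q, hle, hx⟩ := p.extend_dom x
    exact ⟨q, hle, hx⟩
  · obtain ⟨q, hle, hy⟩ := p.extend_ran y
    exact ⟨q, hle, hy⟩
  · obtain ⟨q, hle, h⟩ := p.forces_faith g
    exact ⟨q, hle, h⟩
  · by_cases hL : LOK R L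
    · set A : Finset V := (L.map Prod.fst).toFinset with hA
      set φ : V → V := fun x => if h : ∃ y, (x, y) ∈ L then h.choose else x with hφdef
      have hφ : ∀ pr ∈ L, φ pr.1 = pr.2 := by
        intro pr hpr
        have hex : ∃ y, (pr.1, y) ∈ L := ⟨pr.2, hpr⟩
        have hspec := hex.choose_spec
        have : φ pr.1 = hex.choose := by simp only [hφdef, dif_pos hex]
        rw [this]
        exact (hL.1 _ hspec pr hpr).1 rfl
      have hmemA : ∀ pr ∈ L, pr.1 ∈ A := by
        intro pr hpr
        rw [hA, List.mem_toFinset, List.mem_map]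
        exact ⟨pr, hpr, rfl⟩
      have hAL : ∀ a ∈ A, ∃ pr ∈ L, pr.1 = a := by
        intro a ha
        rw [hA, List.mem_toFinset, List.mem_map] at ha
        obtain ⟨pr, hpr, h⟩ := ha
        exact ⟨pr, hpr, h⟩
      have hinj : Set.InjOn φ (↑A : Set V) := by
        intro x hx y hy hxy
        obtain ⟨pr, hpr, rfl⟩ := hAL x hx
        obtain ⟨pr', hpr', rfl⟩ := hAL y hy
        rw [hφ pr hpr, hφ pr' hpr'] at hxy
        exact (hL.1 pr hpr pr' hpr').2 hxy
      have hpat : ∀ u ∈ A, ∀ v ∈ A, R.Adj u v ↔ R.Adj (φ u) (φ v) := by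
        intro u hu v hv
        obtain ⟨pr, hpr, rfl⟩ := hAL u hu
        obtain ⟨pr', hpr', rfl⟩ := hAL v hv
        rw [hφ pr hpr, hφ pr' hpr']
        exact hL.2 pr hpr pr' hpr'
      obtain ⟨q, hle, s, t, hs, ht, hreal⟩ := p.forces_homog A φ hinj hpat
      refine ⟨q, hle, fun _ => ⟨s, t, hs, ht, ?_⟩⟩
      intro β hext pr hpr
      rw [hreal β hext pr.1 (hmemA pr hpr)]
      exact hφ pr hpr
    · exact ⟨p, PIso.Le.refl p, fun h => absurd h hL⟩

variable [Countable Γ] [Countable V]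

/-- the master construction: a full automorphism in the centraliser extending `p₀`
and achieving every requirement -/
lemma exists_good (C : Ctx Γ V R) (p₀ : PIso C) :
    ∃ β : R ≃g R, (∀ σ ∈ C.S, β * C.ρ σ = C.ρ σ * β) ∧ Ext β p₀ ∧
      ∀ task : (V ⊕ V) ⊕ (Γ ⊕ List (V × V)),
        ∃ q : PIso C, Ext β q ∧ Achieve C task q := by
  haveI : Nonempty ((V ⊕ V) ⊕ (Γ ⊕ List (V × V))) := ⟨Sum.inr (Sum.inl 1)⟩
  obtain ⟨τ, hτ⟩ := exists_surjective_nat ((V ⊕ V) ⊕ (Γ ⊕ List (V × V)))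
  choose F hF1 hF2 using attain C
  set seq : ℕ → PIso C := fun n => Nat.rec p₀ (fun n q => F (τ n) q) n with hseqdef
  have hseqS : ∀ n, seq (n + 1) = F (τ n) (seq n) := fun n => rfl
  have hstep : ∀ n, (seq n).Le (seq (n + 1)) := fun n => hF1 (τ n) (seq n)
  have hle : ∀ m n, m ≤ n → (seq m).Le (seq n) := by
    intro m n h
    induction n, h using Nat.le_induction with
    | base => exact PIso.Le.refl _
    | succ n hmn ih => exact ih.trans (hstep n)
  have hach : ∀ n, Achieve C (τ n) (seq (n + 1)) := fun n => hF2 (τ n) (seq n)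
  have htot : ∀ x : V, ∃ n, x ∈ (seq n).dom := by
    intro x
    obtain ⟨n, hn⟩ := hτ (Sum.inl (Sum.inl x))
    refine ⟨n + 1, ?_⟩
    have := hach n
    rw [hn] at this
    exact this
  have hsur : ∀ y : V, ∃ n, y ∈ (seq n).ran := by
    intro y
    obtain ⟨n, hn⟩ := hτ (Sum.inl (Sum.inr y))
    refine ⟨n + 1, ?_⟩
    have := hach n
    rw [hn] at this
    exact this
  set Ff : V → V := fun x => (seq (htot x).choose).f x with hFf
  have hcoh : ∀ n, ∀ x ∈ (seq n).dom, Ff x = (seq n).f x := by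
    intro n x hx
    have h1 : x ∈ (seq (htot x).choose).dom := (htot x).choose_spec
    rcases le_total ((htot x).choose) n with h | h
    · exact ((hle _ _ h).2 x h1).symm
    · exact (hle n _ h).2 x hx
  have hinj : Injective Ff := by
    intro x y h
    obtain ⟨m, hm⟩ := htot x
    obtain ⟨n, hn⟩ := htot y
    have hx : x ∈ (seq (max m n)).dom := (hle m _ (le_max_left m n)).1 hm
    have hy : y ∈ (seq (max m n)).dom := (hle n _ (le_max_right m n)).1 hn
    rw [hcoh _ x hx, hcoh _ y hy] at h
    exact (seq (max m n)).injOn hx hy h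
  have hsurj : Surjective Ff := by
    intro y
    obtain ⟨n, hn⟩ := hsur y
    refine ⟨(seq n).g y, ?_⟩
    rw [hcoh n _ ((seq n).mapsg y hn)]
    exact (seq n).rg y hn
  have hadj : ∀ x y : V, R.Adj (Ff x) (Ff y) ↔ R.Adj x y := by
    intro x y
    obtain ⟨m, hm⟩ := htot x
    obtain ⟨n, hn⟩ := htot y
    have hx : x ∈ (seq (max m n)).dom := (hle m _ (le_max_left m n)).1 hm
    have hy : y ∈ (seq (max m n)).dom := (hle n _ (le_max_right m n)).1 hn
    rw [hcoh _ x hx, hcoh _ y hy]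
    exact (seq (max m n)).adj x hx y hy
  set β : R ≃g R := ⟨Equiv.ofBijective Ff ⟨hinj, hsurj⟩, hadj _ _⟩ with hβ
  have hβap : ∀ x, β x = Ff x := fun x => rfl
  have hextn : ∀ n, Ext β (seq n) := by
    intro n x hx
    rw [hβap]
    exact hcoh n x hx
  refine ⟨β, ?_, hextn 0, ?_⟩
  · intro σ hσ
    have : ∀ x, β (C.ρ σ x) = C.ρ σ (β x) := by
      intro x
      obtain ⟨n, hn⟩ := htot x
      rw [hβap, hβap, hcoh n x hn, hcoh n _ ((seq n).domS σ hσ x hn)]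
      exact (seq n).equi σ hσ x hn
    exact RelIso.ext fun x => this x
  · intro task
    obtain ⟨n, hn⟩ := hτ task
    exact ⟨seq (n + 1), hextn (n + 1), hn ▸ hach n⟩

end AD

namespace AD
attribute [local instance] Classical.propDecidable
open Function Set
variable {Γ : Type} [Group Γ] {V : Type} {R : SimpleGraph V}

section Topo
variable {C : Ctx Γ V R}

lemma isOpen_eval (x y : V) : IsOpen {β : R ≃g R | β x = y} := by
  letI : TopologicalSpace V := ⊥
  haveI : DiscreteTopology V := ⟨rfl⟩
  have h : IsOpen {p : (V → V) × (V → V) | p.1 x = y} := by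
    have hc : Continuous (fun p : (V → V) × (V → V) => p.1 x) :=
      (continuous_apply x).comp continuous_fst
    exact hc.isOpen_preimage {y} (isOpen_discrete _)
  exact isOpen_induced (f := fun (α : R ≃g R) =>
    ((fun x => α x, fun x => α.symm x) : (V → V) × (V → V))) h

lemma isOpen_eval_symm (x y : V) : IsOpen {β : R ≃g R | β.symm x = y} := by
  letI : TopologicalSpace V := ⊥
  haveI : DiscreteTopology V := ⟨rfl⟩
  have h : IsOpen {p : (V → V) × (V → V) | p.2 x = y} := by
    have hc : Continuous (fun p : (V → V) × (V → V) => p.2 x) :=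
      (continuous_apply x).comp continuous_snd
    exact hc.isOpen_preimage {y} (isOpen_discrete _)
  exact isOpen_induced (f := fun (α : R ≃g R) =>
    ((fun x => α x, fun x => α.symm x) : (V → V) × (V → V))) h

lemma isOpen_sub_eval (x y : V) : IsOpen {α : ZT C | α.1 x = y} :=
  (isOpen_eval x y).preimage continuous_subtype_val

lemma isOpen_sub_eval_symm (x y : V) : IsOpen {α : ZT C | (α.1).symm x = y} :=
  (isOpen_eval_symm x y).preimage continuous_subtype_val

lemma isOpen_chEval (ps : List (Γ × Γ)) (x y : V) :
    IsOpen {α : ZT C | chEval C α.1 ps x = y} := by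
  induction ps generalizing y with
  | nil =>
    by_cases h : x = y
    · have : {α : ZT C | chEval C α.1 [] x = y} = univ := by
        ext α; simp [chEval, h]
      rw [this]; exact isOpen_univ
    · have : {α : ZT C | chEval C α.1 [] x = y} = ∅ := by
        ext α; simp [chEval, h]
      rw [this]; exact isOpen_empty
  | cons pr tl ih =>
    have hset : {α : ZT C | chEval C α.1 (pr :: tl) x = y} =
        ⋃ v : V, ⋃ w : V, ({α : ZT C | chEval C α.1 tl x = v} ∩
          ({α : ZT C | α.1 v = w} ∩
            {α : ZT C | (α.1).symm (C.ρ pr.2 w) = C.ρ pr.1⁻¹ y})) := by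
      ext α
      simp only [mem_setOf_eq, mem_iUnion, mem_inter_iff]
      constructor
      · intro h
        refine ⟨chEval C α.1 tl x, α.1 (chEval C α.1 tl x), rfl, rfl, ?_⟩
        have := h
        show (α.1).symm _ = _
        rw [← C.rho_eq_iff]
        exact this
      · rintro ⟨v, w, h1, h2, h3⟩
        show C.ρ pr.1 ((α.1).symm (C.ρ pr.2 (α.1 (chEval C α.1 tl x)))) = y
        rw [h1, h2, C.rho_eq_iff]
        exact h3
    rw [hset]
    refine isOpen_iUnion fun v => isOpen_iUnion fun w =>
      (ih v).inter ((isOpen_sub_eval v w).inter (isOpen_sub_eval_symm _ _))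

lemma isOpen_PiEval (g : Γ) (z y : V) : IsOpen {α : ZT C | C.Pi α g z = y} := by
  rcases C.form' g with hg | ⟨c₀, ps, hc₀, hps, hprod⟩
  · by_cases h : C.ρ g z = y
    · have : {α : ZT C | C.Pi α g z = y} = univ := by
        ext α; simp [C.Pi_Γ₁ α hg, h]
      rw [this]; exact isOpen_univ
    · have : {α : ZT C | C.Pi α g z = y} = ∅ := by
        ext α; simp [C.Pi_Γ₁ α hg, h]
      rw [this]; exact isOpen_empty
  · have hset : {α : ZT C | C.Pi α g z = y} =
        {α : ZT C | chEval C α.1 ps (C.ρ c₀ z) = y} := by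
      ext α
      simp only [mem_setOf_eq]
      rw [← hprod, C.Pi_chunk α ps hps hc₀ z]
    rw [hset]
    exact isOpen_chEval ps _ y

lemma exists_basic {U : Set (ZT C)} (hU : IsOpen U) {α : ZT C} (hα : α ∈ U) :
    ∃ E₁ E₂ : Finset V, ∀ γ : ZT C, (∀ x ∈ E₁, γ.1 x = α.1 x) →
      (∀ x ∈ E₂, (γ.1).symm x = (α.1).symm x) → γ ∈ U := by
  letI : TopologicalSpace V := ⊥
  obtain ⟨U₁, hU₁, rfl⟩ := isOpen_induced_iff.1 hU
  obtain ⟨U₂, hU₂, rfl⟩ := isOpen_induced_iff.1 hU₁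
  set J : (R ≃g R) → (V → V) × (V → V) :=
    fun β => ((fun x => β x, fun x => β.symm x) : (V → V) × (V → V)) with hJ
  have hmem : J α.1 ∈ U₂ := hα
  obtain ⟨u, v, hu, hv, hm1, hm2, hsub⟩ := isOpen_prod_iff.1 hU₂ _ _ hmem
  obtain ⟨I₁, u', hu', hsub1⟩ := isOpen_pi_iff.1 hu _ hm1
  obtain ⟨I₂, v', hv', hsub2⟩ := isOpen_pi_iff.1 hv _ hm2
  refine ⟨I₁, I₂, ?_⟩
  intro γ h1 h2
  show J γ.1 ∈ U₂
  apply hsub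
  constructor
  · apply hsub1
    intro i hi
    show γ.1 i ∈ u' i
    rw [h1 i hi]
    exact (hu' i hi).2
  · apply hsub2
    intro i hi
    show (γ.1).symm i ∈ v' i
    rw [h2 i hi]
    exact (hv' i hi).2

end Topo
end AD

namespace AD
attribute [local instance] Classical.propDecidable
open Function Set
variable {Γ : Type} [Group Γ] {V : Type} {R : SimpleGraph V}

/-- the target set: `π_α` faithful and homogeneous (list form) -/
def OSet (C : Ctx Γ V R) : Set (ZT C) :=
  {α | Injective (C.Pi α) ∧
    ∀ L : List (V × V), LOK R L → ∃ g : Γ, ∀ pr ∈ L, C.Pi α g pr.1 = pr.2}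

lemma LOK_data {L : List (V × V)} (hL : LOK R L) :
    ∃ (A : Finset V) (φ : V → V), Set.InjOn φ (↑A : Set V) ∧
      (∀ u ∈ A, ∀ v ∈ A, (R.Adj u v ↔ R.Adj (φ u) (φ v))) ∧
      ∀ pr ∈ L, pr.1 ∈ A ∧ φ pr.1 = pr.2 := by
  classical
  set A : Finset V := (L.map Prod.fst).toFinset with hA
  set φ : V → V := fun x => if h : ∃ y, (x, y) ∈ L then h.choose else x with hφdef
  have hφ : ∀ pr ∈ L, φ pr.1 = pr.2 := by
    intro pr hpr
    have hex : ∃ y, (pr.1, y) ∈ L := ⟨pr.2, hpr⟩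
    have hspec := hex.choose_spec
    have : φ pr.1 = hex.choose := by simp only [hφdef, dif_pos hex]
    rw [this]
    exact (hL.1 _ hspec pr hpr).1 rfl
  have hAL : ∀ a ∈ A, ∃ pr ∈ L, pr.1 = a := by
    intro a ha
    rw [hA, List.mem_toFinset, List.mem_map] at ha
    obtain ⟨pr, hpr, h⟩ := ha
    exact ⟨pr, hpr, h⟩
  refine ⟨A, φ, ?_, ?_, ?_⟩
  · intro x hx y hy hxy
    obtain ⟨pr, hpr, rfl⟩ := hAL x hx
    obtain ⟨pr', hpr', rfl⟩ := hAL y hy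
    rw [hφ pr hpr, hφ pr' hpr'] at hxy
    exact (hL.1 pr hpr pr' hpr').2 hxy
  · intro u hu v hv
    obtain ⟨pr, hpr, rfl⟩ := hAL u hu
    obtain ⟨pr', hpr', rfl⟩ := hAL v hv
    rw [hφ pr hpr, hφ pr' hpr']
    exact hL.2 pr hpr pr' hpr'
  · intro pr hpr
    refine ⟨?_, hφ pr hpr⟩
    rw [hA, List.mem_toFinset, List.mem_map]
    exact ⟨pr, hpr, rfl⟩

set_option linter.unusedSectionVars false

variable [Countable Γ] [Countable V]

lemma isOpen_forall_list {C : Ctx Γ V R} (g : Γ) (L : List (V × V)) :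
    IsOpen {α : ZT C | ∀ pr ∈ L, C.Pi α g pr.1 = pr.2} := by
  induction L with
  | nil =>
    have : {α : ZT C | ∀ pr ∈ ([] : List (V × V)), C.Pi α g pr.1 = pr.2} = univ := by
      ext α; simp
    rw [this]; exact isOpen_univ
  | cons hd tl ih =>
    have : {α : ZT C | ∀ pr ∈ hd :: tl, C.Pi α g pr.1 = pr.2} =
        {α : ZT C | C.Pi α g hd.1 = hd.2} ∩ {α : ZT C | ∀ pr ∈ tl, C.Pi α g pr.1 = pr.2} := by
      ext α; simp [List.forall_mem_cons]
    rw [this]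
    exact (isOpen_PiEval g hd.1 hd.2).inter ih

lemma isGδ_OSet (C : Ctx Γ V R) : IsGδ (OSet C) := by
  have hdecomp : OSet C =
      (⋂ g : Γ, {α : ZT C | g = 1 ∨ ∃ z, C.Pi α g z ≠ z}) ∩
      (⋂ L : List (V × V),
        {α : ZT C | LOK R L → ∃ g : Γ, ∀ pr ∈ L, C.Pi α g pr.1 = pr.2}) := by
    ext α
    simp only [OSet, mem_setOf_eq, mem_inter_iff, mem_iInter]
    constructor
    · rintro ⟨hinj, hhom⟩
      refine ⟨fun g => ?_, hhom⟩
      by_cases hg : g = 1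
      · exact Or.inl hg
      · refine Or.inr ?_
        by_contra hz
        push_neg at hz
        have h1 : C.Pi α g = 1 := RelIso.ext fun z => hz z
        exact hg (hinj (by rw [h1, map_one]))
    · rintro ⟨h1, h2⟩
      refine ⟨(injective_iff_map_eq_one (C.Pi α)).2 fun a ha => ?_, h2⟩
      rcases h1 a with h | ⟨z, hz⟩
      · exact h
      · exact absurd (by rw [ha]; rfl) hz
  rw [hdecomp]
  refine IsGδ.inter (IsGδ.iInter fun g => IsOpen.isGδ ?_) (IsGδ.iInter fun L => IsOpen.isGδ ?_)
  · by_cases hg : g = 1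
    · have : {α : ZT C | g = 1 ∨ ∃ z, C.Pi α g z ≠ z} = univ := by
        ext α; simp [hg]
      rw [this]; exact isOpen_univ
    · have : {α : ZT C | g = 1 ∨ ∃ z, C.Pi α g z ≠ z} =
          ⋃ z : V, ⋃ y : V, ⋃ _ : y ≠ z, {α : ZT C | C.Pi α g z = y} := by
        ext α
        simp only [mem_setOf_eq, mem_iUnion]
        constructor
        · rintro (h | ⟨z, hz⟩)
          · exact absurd h hg
          · exact ⟨z, C.Pi α g z, hz, rfl⟩
        · rintro ⟨z, y, hyz, h⟩
          exact Or.inr ⟨z, by rw [h]; exact hyz⟩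
      rw [this]
      exact isOpen_iUnion fun z => isOpen_iUnion fun y => isOpen_iUnion fun _ =>
        isOpen_PiEval g z y
  · by_cases hL : LOK R L
    · have : {α : ZT C | LOK R L → ∃ g : Γ, ∀ pr ∈ L, C.Pi α g pr.1 = pr.2} =
          ⋃ g : Γ, {α : ZT C | ∀ pr ∈ L, C.Pi α g pr.1 = pr.2} := by
        ext α
        simp only [mem_setOf_eq, mem_iUnion]
        constructor
        · intro h; exact h hL
        · intro h _; exact h
      rw [this]
      exact isOpen_iUnion fun g => isOpen_forall_list g L
    · have : {α : ZT C | LOK R L → ∃ g : Γ, ∀ pr ∈ L, C.Pi α g pr.1 = pr.2} = univ := by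
        ext α; simp only [mem_setOf_eq, mem_univ, iff_true]; exact fun h => absurd h hL
      rw [this]; exact isOpen_univ

lemma OSet_eq (C : Ctx Γ V R) : OSet C =
    {α : ZT C | ∃ π : Γ →* (R ≃g R),
      (∀ g : C.Γ₁, π g = C.ρ g) ∧
      (∀ g : C.Γ₂, π g = (α.1)⁻¹ * C.ρ g * α.1) ∧
      Injective π ∧ IsHomogeneousAction R π} := by
  ext α
  simp only [OSet, mem_setOf_eq]
  constructor
  · rintro ⟨hinj, hhom⟩
    refine ⟨C.Pi α, fun g => C.Pi_Γ₁ α g.2, fun g => C.Pi_Γ₂ α g.2, hinj, ?_⟩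
    intro A φ hφinj hφpat
    set L : List (V × V) := A.toList.map fun a => (a, φ a) with hLdef
    have hmem : ∀ u ∈ A, (u, φ u) ∈ L := by
      intro u hu
      rw [hLdef, List.mem_map]
      exact ⟨u, Finset.mem_toList.2 hu, rfl⟩
    have hLA : ∀ pr ∈ L, pr.1 ∈ A ∧ pr.2 = φ pr.1 := by
      intro pr hpr
      rw [hLdef, List.mem_map] at hpr
      obtain ⟨a, ha, rfl⟩ := hpr
      exact ⟨Finset.mem_toList.1 ha, rfl⟩
    have hLOK : LOK R L := by
      constructor
      · intro pr hpr pr' hpr'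
        obtain ⟨h1, h2⟩ := hLA pr hpr
        obtain ⟨h1', h2'⟩ := hLA pr' hpr'
        rw [h2, h2']
        constructor
        · intro h; rw [h]
        · intro h; exact hφinj h1 h1' h
      · intro pr hpr pr' hpr'
        obtain ⟨h1, h2⟩ := hLA pr hpr
        obtain ⟨h1', h2'⟩ := hLA pr' hpr'
        rw [h2, h2']
        exact hφpat _ h1 _ h1'
    obtain ⟨g, hg⟩ := hhom L hLOK
    exact ⟨g, fun u hu => hg (u, φ u) (hmem u hu)⟩
  · rintro ⟨π, hπ1, hπ2, hπinj, hπhom⟩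
    have hπ : π = C.Pi α := C.Pi_unique α π hπ1 hπ2
    subst hπ
    refine ⟨hπinj, ?_⟩
    intro L hL
    obtain ⟨A, φ, hφinj, hφpat, hdata⟩ := LOK_data hL
    obtain ⟨g, hg⟩ := hπhom A φ hφinj hφpat
    refine ⟨g, fun pr hpr => ?_⟩
    rw [hg pr.1 (hdata pr hpr).1]
    exact (hdata pr hpr).2

lemma dense_OSet (C : Ctx Γ V R) : Dense (OSet C) := by
  rw [dense_iff_inter_open]
  rintro U hU ⟨α, hα⟩
  obtain ⟨E₁, E₂, hbasic⟩ := exists_basic hU hα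
  set D : Finset V := (E₁ ∪ E₂.image fun y => (α.1).symm y).biUnion (fun w => C.orb w)
    with hD
  have hDS : ∀ σ ∈ C.S, ∀ x ∈ D, C.ρ σ x ∈ D := by
    intro σ hσ x hx
    rw [hD, Finset.mem_biUnion] at hx ⊢
    obtain ⟨w, hw, hx⟩ := hx
    obtain ⟨τ, hτ, rfl⟩ := (C.mem_orb).1 hx
    exact ⟨w, hw, by rw [C.rho_mul_apply]; exact C.rho_mem_orb (mul_mem hσ hτ) w⟩
  have hmemD : ∀ x ∈ E₁ ∪ E₂.image fun y => (α.1).symm y, x ∈ D := by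
    intro x hx
    rw [hD, Finset.mem_biUnion]
    exact ⟨x, hx, C.self_mem_orb x⟩
  set p₀ : PIso C :=
    { dom := D
      ran := D.image fun x => α.1 x
      f := fun x => α.1 x
      g := fun y => (α.1).symm y
      mapsf := fun x hx => Finset.mem_image_of_mem _ hx
      mapsg := by
        intro y hy
        rw [Finset.mem_image] at hy
        obtain ⟨x, hx, rfl⟩ := hy
        show (α.1).symm (α.1 x) ∈ D
        rw [RelIso.symm_apply_apply]
        exact hx
      lg := fun x _ => α.1.toEquiv.symm_apply_apply x
      rg := fun y _ => α.1.toEquiv.apply_symm_apply y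
      adj := fun u _ v _ => (α.1).map_adj_iff
      domS := hDS
      equi := by
        intro σ hσ x _
        have h := α.2 σ hσ
        exact congrArg (fun e : R ≃g R => e x) h } with hp₀
  obtain ⟨β, hcomm, hext₀, htasks⟩ := exists_good C p₀
  set B : ZT C := ⟨β, hcomm⟩ with hB
  refine ⟨B, ?_, ?_⟩
  · apply hbasic
    · intro x hx
      exact hext₀ x (hmemD x (Finset.mem_union_left _ hx))
    · intro x hx
      have hu : (α.1).symm x ∈ p₀.dom :=
        hmemD _ (Finset.mem_union_right _ (Finset.mem_image_of_mem _ hx))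
      have h1 : β ((α.1).symm x) = x := by
        rw [hext₀ _ hu]
        exact α.1.toEquiv.apply_symm_apply x
      show β.symm x = (α.1).symm x
      calc β.symm x = β.symm (β ((α.1).symm x)) := by rw [h1]
        _ = (α.1).symm x := β.symm_apply_apply _
  · constructor
    · rw [injective_iff_map_eq_one]
      intro g hg1
      obtain ⟨q, hext, hach⟩ := htasks (Sum.inr (Sum.inl g))
      rcases hach with hg | hg | ⟨c₀, ps, y, z', hc₀, hps, hprod, hne, heval⟩
      · apply C.hfaith
        rw [map_one, ← C.Pi_Γ₁ B hg]
        exact hg1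
      · apply C.hfaith
        rw [map_one]
        have h2 := hg1
        rw [C.Pi_Γ₂ B hg] at h2
        have : C.ρ g = B.1 * 1 * (B.1)⁻¹ := by rw [← h2]; group
        simpa using this
      · have h3 : C.Pi B g y = z' := by
          rw [← hprod, C.Pi_chunk B ps hps hc₀ y]
          exact heval β hext
        rw [hg1] at h3
        exact absurd h3.symm hne
    · intro L hL
      obtain ⟨q, hext, hach⟩ := htasks (Sum.inr (Sum.inr L))
      obtain ⟨s, t, hs, ht, hreal⟩ := hach hL
      refine ⟨s⁻¹ * t, fun pr hpr => ?_⟩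
      have h1 : C.Pi B (s⁻¹ * t) pr.1 = C.Pi B s⁻¹ (C.Pi B t pr.1) := by
        rw [map_mul]; rfl
      rw [h1, C.Pi_Γ₂_apply B ht, C.Pi_Γ₁ B (inv_mem hs)]
      exact hreal β hext pr hpr

end AD

/-- For an amalgamated free product `Γ = Γ₁ *_S Γ₂` over a finite subgroup `S`, acting
faithfully, non-singularly, with property (F), with `S` acting freely and highly core-free
with respect to both factors, the set of `α ∈ Z` (the centraliser of `ρ(S)` in `Aut R`)
for which the deformed action `π_α` is faithful and homogeneous is a dense `G_δ` in `Z`. -/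
theorem amalgam_dense_Gdelta {Γ : Type} [Group Γ] [Countable Γ]
    (Γ₁ Γ₂ S : Subgroup Γ) (h₁ : S ≤ Γ₁) (h₂ : S ≤ Γ₂) [Finite S]
    (hamalg : IsAmalgamatedProduct Γ₁ Γ₂ S h₁ h₂)
    {V : Type} [Countable V] (R : SimpleGraph V) (hR : R.HasPropR)
    (ρ : Γ →* (R ≃g R)) (hfaith : Function.Injective ρ)
    (hns : NonSingularAction R ρ) (hF : PropertyF R ρ)
    (hfree : ∀ σ ∈ S, ∀ x : V, ρ σ x = x → σ = 1)
    (hhcf₁ : HighlyCoreFreeWrt R ρ S Γ₁) (hhcf₂ : HighlyCoreFreeWrt R ρ S Γ₂) :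
    IsGδ {α : {β : R ≃g R // ∀ σ ∈ S, β * ρ σ = ρ σ * β} |
        ∃ π : Γ →* (R ≃g R),
          (∀ g : Γ₁, π g = ρ g) ∧
          (∀ g : Γ₂, π g = (α : R ≃g R)⁻¹ * ρ g * (α : R ≃g R)) ∧
          Function.Injective π ∧ IsHomogeneousAction R π} ∧
    Dense {α : {β : R ≃g R // ∀ σ ∈ S, β * ρ σ = ρ σ * β} |
        ∃ π : Γ →* (R ≃g R),
          (∀ g : Γ₁, π g = ρ g) ∧
          (∀ g : Γ₂, π g = (α : R ≃g R)⁻¹ * ρ g * (α : R ≃g R)) ∧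
          Function.Injective π ∧ IsHomogeneousAction R π} := by
  classical
  haveI : Finite ((S : Set Γ) : Type) := ‹Finite S›
  let C : AD.Ctx Γ V R :=
    { ρ := ρ, S := S, Sfin := (S : Set Γ).toFinite.toFinset,
      hSfin := fun σ => Set.Finite.mem_toFinset _,
      hR := hR, hns := hns, hF := hF, hfree := hfree,
      Γ₁ := Γ₁, Γ₂ := Γ₂, hS₁ := h₁, hS₂ := h₂, hamalg := hamalg,
      hfaith := hfaith, hhcf₁ := hhcf₁, hhcf₂ := hhcf₂ }
  constructor
  · have h := AD.isGδ_OSet C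
    rw [AD.OSet_eq] at h
    exact h
  · have h := AD.dense_OSet C
    rw [AD.OSet_eq] at h
    exact h
end

section
/- If Γ₁ and Γ₂ are countably infinite groups, then the free product Γ₁ * Γ₂ admits a faithful homogeneous action by automorphisms on any countable simple graph with property (R). -/
noncomputable section
namespace FPH
open Classical

variable {Γ : Type*} [Group Γ]

abbrev Vt (Γ : Type*) := Γ × ℕ × Finset ℕ

/-- left translation -/
def tr (g : Γ) (x : Vt Γ) : Vt Γ := (g * x.1, x.2)

@[simp] lemma tr_fst (g : Γ) (x : Vt Γ) : (tr g x).1 = g * x.1 := rfl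
@[simp] lemma tr_snd (g : Γ) (x : Vt Γ) : (tr g x).2 = x.2 := rfl
@[simp] lemma tr_tr (g h : Γ) (x : Vt Γ) : tr g (tr h x) = tr (g * h) x := by
  simp [tr, mul_assoc]
@[simp] lemma tr_one (x : Vt Γ) : tr (1 : Γ) x = x := by simp [tr]

lemma tr_injective (g : Γ) : Function.Injective (tr (Γ := Γ) g) := by
  intro x y h
  obtain ⟨h1, h2⟩ := Prod.ext_iff.mp h
  exact Prod.ext (mul_left_cancel h1) h2

lemma tr_eq_tr_iff {g : Γ} {x y : Vt Γ} : tr g x = tr g y ↔ x = y :=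
  ⟨fun h => tr_injective g h, fun h => by rw [h]⟩

lemma tr_eq_iff {g : Γ} {x y : Vt Γ} : tr g x = y ↔ x = tr g⁻¹ y := by
  constructor
  · rintro rfl; simp
  · rintro rfl; simp

/-- the "address" of a lower vertex `x` as seen from a vertex with first
coordinate `c`. -/
def pos (cd : Γ ↪ ℕ) (c : Γ) (x : Vt Γ) : ℕ :=
  Nat.pair (cd (c⁻¹ * x.1)) (Encodable.encode x.2)

lemma pos_inj (cd : Γ ↪ ℕ) (c : Γ) {x y : Vt Γ} (h : pos cd c x = pos cd c y) : x = y := by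
  rw [pos, pos, Nat.pair_eq_pair] at h
  obtain ⟨h1, h2⟩ := h
  have h1' : c⁻¹ * x.1 = c⁻¹ * y.1 := cd.injective h1
  exact Prod.ext (mul_left_cancel h1') (Encodable.encode_injective h2)

/-- the invariant random-like graph on `Γ × ℕ × Finset ℕ`. -/
def gra (cd : Γ ↪ ℕ) : SimpleGraph (Vt Γ) where
  Adj x y := (x.2.1 < y.2.1 ∧ pos cd y.1 x ∈ y.2.2) ∨ (y.2.1 < x.2.1 ∧ pos cd x.1 y ∈ x.2.2)
  symm := ⟨by intro x y h; tauto⟩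
  loopless := ⟨by intro x h; rcases h with ⟨h, -⟩ | ⟨h, -⟩ <;> exact lt_irrefl _ h⟩

lemma gra_adj (cd : Γ ↪ ℕ) (x y : Vt Γ) :
    (gra cd).Adj x y ↔
      (x.2.1 < y.2.1 ∧ pos cd y.1 x ∈ y.2.2) ∨ (y.2.1 < x.2.1 ∧ pos cd x.1 y ∈ x.2.2) :=
  Iff.rfl

lemma not_adj_lvl_eq (cd : Γ ↪ ℕ) {x y : Vt Γ} (h : x.2.1 = y.2.1) : ¬ (gra cd).Adj x y := by
  rintro (⟨h1, -⟩ | ⟨h1, -⟩) <;> omega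

@[simp] lemma adj_tr (cd : Γ ↪ ℕ) (g : Γ) (x y : Vt Γ) :
    (gra cd).Adj (tr g x) (tr g y) ↔ (gra cd).Adj x y := by
  have hp : ∀ u v : Vt Γ, pos cd (tr g u).1 (tr g v) = pos cd u.1 v := by
    intro u v; simp [pos, tr, mul_assoc]
  constructor
  · rintro (⟨h1, h2⟩ | ⟨h1, h2⟩)
    · left; rw [hp] at h2; exact ⟨h1, h2⟩
    · right; rw [hp] at h2; exact ⟨h1, h2⟩
  · rintro (⟨h1, h2⟩ | ⟨h1, h2⟩)
    · left; exact ⟨h1, by rw [hp y x]; exact h2⟩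
    · right; exact ⟨h1, by rw [hp x y]; exact h2⟩

/-- Strong extension: one can find a vertex at any prescribed fresh level `B+1`,
with any first coordinate, realizing any adjacency prescription on vertices of
level `≤ B`. -/
lemma exists_ext (cd : Γ ↪ ℕ) (T : Finset (Vt Γ)) (ε : Vt Γ → Prop) (B : ℕ)
    (hT : ∀ t ∈ T, t.2.1 ≤ B) (c : Γ) :
    ∃ z : Vt Γ, z.1 = c ∧ z.2.1 = B + 1 ∧ ∀ t ∈ T, ((gra cd).Adj z t ↔ ε t) := by
  classical
  set s : Finset ℕ := (T.filter ε).image (pos cd c) with hs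
  refine ⟨(c, B + 1, s), rfl, rfl, ?_⟩
  intro t ht
  have hlt : t.2.1 < B + 1 := Nat.lt_succ_of_le (hT t ht)
  have hz1 : ((c, B + 1, s) : Vt Γ).2.1 = B + 1 := rfl
  have hz2 : ((c, B + 1, s) : Vt Γ).2.2 = s := rfl
  have hz3 : ((c, B + 1, s) : Vt Γ).1 = c := rfl
  rw [gra_adj, hz1, hz2, hz3]
  constructor
  · rintro (⟨h1, -⟩ | ⟨-, h2⟩)
    · omega
    · obtain ⟨t', ht', he⟩ := Finset.mem_image.1 h2
      obtain ⟨-, ht'ε⟩ := Finset.mem_filter.1 ht'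
      have : t' = t := pos_inj cd c he
      rwa [this] at ht'ε
  · intro hε
    right
    exact ⟨hlt, Finset.mem_image_of_mem _ (Finset.mem_filter.2 ⟨ht, hε⟩)⟩

lemma propR (cd : Γ ↪ ℕ) : (gra cd).HasPropR := by
  classical
  intro U W hUW
  set T := U ∪ W with hT
  set B := T.sup (fun t => t.2.1) with hB
  obtain ⟨z, -, hz2, hz3⟩ := exists_ext cd T (fun t => t ∈ U) B
    (fun t ht => Finset.le_sup (f := fun t => t.2.1) ht) 1
  have hzT : z ∉ T := by
    intro h
    have h2 : z.2.1 ≤ B := Finset.le_sup (f := fun t : Vt Γ => t.2.1) h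
    omega
  refine ⟨z, fun h => hzT (Finset.mem_union_left _ h),
    fun h => hzT (Finset.mem_union_right _ h), ?_, ?_⟩
  · intro u hu; exact (hz3 u (Finset.mem_union_left _ hu)).2 hu
  · intro w hw hadj
    have := (hz3 w (Finset.mem_union_right _ hw)).1 hadj
    exact (Finset.disjoint_right.1 hUW hw) this

/-- flatness: for fixed `u z`, only finitely many `h` make `u` adjacent to `tr h z`. -/
lemma finite_adj_tr (cd : Γ ↪ ℕ) (u z : Vt Γ) :
    {h : Γ | (gra cd).Adj u (tr h z)}.Finite := by
  classical
  have key : {h : Γ | (gra cd).Adj u (tr h z)} ⊆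
      {h : Γ | cd ((h * z.1)⁻¹ * u.1) ≤ z.2.2.sup id} ∪
      {h : Γ | cd (u.1⁻¹ * (h * z.1)) ≤ u.2.2.sup id} := by
    intro h hh
    rcases hh with ⟨-, h2⟩ | ⟨-, h2⟩
    · left
      have h3 : pos cd (tr h z).1 u ∈ z.2.2 := h2
      have := Finset.le_sup (f := id) h3
      simp only [id] at this
      calc cd ((h * z.1)⁻¹ * u.1) ≤ pos cd (tr h z).1 u := Nat.left_le_pair _ _
        _ ≤ z.2.2.sup id := this
    · right
      have h3 : pos cd u.1 (tr h z) ∈ u.2.2 := h2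
      have := Finset.le_sup (f := id) h3
      simp only [id] at this
      calc cd (u.1⁻¹ * (h * z.1)) ≤ pos cd u.1 (tr h z) := Nat.left_le_pair _ _
        _ ≤ u.2.2.sup id := this
  refine Set.Finite.subset (Set.Finite.union ?_ ?_) key
  · have hinj : Function.Injective (fun h : Γ => cd ((h * z.1)⁻¹ * u.1)) := by
      intro a b hab
      have h1 := cd.injective hab
      have h2 : (a * z.1)⁻¹ = (b * z.1)⁻¹ := mul_right_cancel h1
      have h3 : a * z.1 = b * z.1 := inv_injective h2
      exact mul_right_cancel h3
    exact Set.Finite.preimage hinj.injOn (Set.finite_Iic _)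
  · have hinj : Function.Injective (fun h : Γ => cd (u.1⁻¹ * (h * z.1))) := by
      intro a b hab
      have h1 := cd.injective hab
      have h2 : a * z.1 = b * z.1 := mul_left_cancel h1
      exact mul_right_cancel h2
    exact Set.Finite.preimage hinj.injOn (Set.finite_Iic _)

/-! ### Partial isomorphisms between two graphs -/

section PI

variable {α β : Type*} (G : SimpleGraph α) (H : SimpleGraph β)

structure PI where
  s : Finset (α × β)
  fn : ∀ ⦃a b b'⦄, (a, b) ∈ s → (a, b') ∈ s → b = b'
  inj : ∀ ⦃a a' b⦄, (a, b) ∈ s → (a', b) ∈ s → a = a'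
  adj : ∀ ⦃a b a' b'⦄, (a, b) ∈ s → (a', b') ∈ s → (G.Adj a a' ↔ H.Adj b b')

variable {G H}

def PI.empty : PI G H :=
  ⟨∅, by simp, by simp, by simp⟩

/-- add one pair to a partial iso -/
lemma PI.insertPair (p : PI G H) {a : α} {b : β}
    (ha : ∀ b', (a, b') ∉ p.s) (hb : ∀ a', (a', b) ∉ p.s)
    (hadj : ∀ ⦃a' b'⦄, (a', b') ∈ p.s → (G.Adj a a' ↔ H.Adj b b')) :
    ∃ q : PI G H, p.s ⊆ q.s ∧ (a, b) ∈ q.s ∧ ∀ x ∈ q.s, x = (a, b) ∨ x ∈ p.s := by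
  classical
  refine ⟨⟨insert (a, b) p.s, ?_, ?_, ?_⟩, Finset.subset_insert _ _,
    Finset.mem_insert_self _ _, fun x hx => Finset.mem_insert.1 hx⟩
  · intro x y y' hx hy
    rcases Finset.mem_insert.1 hx with h1 | h1 <;> rcases Finset.mem_insert.1 hy with h2 | h2
    · rw [Prod.ext_iff] at h1 h2; exact h1.2.trans h2.2.symm
    · exfalso; obtain ⟨rfl, rfl⟩ := Prod.ext_iff.mp h1; exact ha _ h2
    · exfalso; obtain ⟨rfl, rfl⟩ := Prod.ext_iff.mp h2; exact ha _ h1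
    · exact p.fn h1 h2
  · intro x x' y hx hy
    rcases Finset.mem_insert.1 hx with h1 | h1 <;> rcases Finset.mem_insert.1 hy with h2 | h2
    · rw [Prod.ext_iff] at h1 h2; exact h1.1.trans h2.1.symm
    · exfalso; obtain ⟨rfl, rfl⟩ := Prod.ext_iff.mp h1; exact hb _ h2
    · exfalso; obtain ⟨rfl, rfl⟩ := Prod.ext_iff.mp h2; exact hb _ h1
    · exact p.inj h1 h2
  · intro x y x' y' hx hy
    rcases Finset.mem_insert.1 hx with h1 | h1 <;> rcases Finset.mem_insert.1 hy with h2 | h2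
    · obtain ⟨rfl, rfl⟩ := Prod.ext_iff.mp h1
      obtain ⟨rfl, rfl⟩ := Prod.ext_iff.mp h2
      simp
    · obtain ⟨rfl, rfl⟩ := Prod.ext_iff.mp h1
      exact hadj h2
    · obtain ⟨rfl, rfl⟩ := Prod.ext_iff.mp h2
      constructor
      · intro h; exact (H.adj_symm ((hadj h1).1 (G.adj_symm h)))
      · intro h; exact (G.adj_symm ((hadj h1).2 (H.adj_symm h)))
    · exact p.adj h1 h2

/-- extend the domain of a partial iso, using property (R) of the target graph. -/
lemma PI.extDom (hH : H.HasPropR) (p : PI G H) (a : α) :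
    ∃ q : PI G H, p.s ⊆ q.s ∧ ∃ b, (a, b) ∈ q.s := by
  classical
  by_cases hdom : ∃ b, (a, b) ∈ p.s
  · exact ⟨p, Finset.Subset.refl _, hdom⟩
  push_neg at hdom
  set U : Finset β := (p.s.filter (fun q => G.Adj a q.1)).image Prod.snd with hU
  set W : Finset β := (p.s.filter (fun q => ¬ G.Adj a q.1)).image Prod.snd with hW
  have hdisj : Disjoint U W := by
    rw [Finset.disjoint_left]
    intro b hbU hbW
    obtain ⟨⟨a1, b1⟩, h1, rfl⟩ := Finset.mem_image.1 hbU
    obtain ⟨⟨a2, b2⟩, h2, he⟩ := Finset.mem_image.1 hbW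
    obtain ⟨h1s, h1a⟩ := Finset.mem_filter.1 h1
    obtain ⟨h2s, h2a⟩ := Finset.mem_filter.1 h2
    have he2 : b2 = b1 := he
    subst he2
    have : a2 = a1 := p.inj h2s h1s
    rw [this] at h2a
    exact h2a h1a
  obtain ⟨z, hzU, hzW, hz1, hz2⟩ := hH U W hdisj
  have hzran : ∀ a', (a', z) ∉ p.s := by
    intro a' ha'
    by_cases h : G.Adj a a'
    · exact hzU (Finset.mem_image_of_mem _ (Finset.mem_filter.2 ⟨ha', h⟩))
    · exact hzW (Finset.mem_image_of_mem _ (Finset.mem_filter.2 ⟨ha', h⟩))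
  have hadj' : ∀ ⦃a' b'⦄, (a', b') ∈ p.s → (G.Adj a a' ↔ H.Adj z b') := by
    intro a' b' hab
    constructor
    · intro h
      exact hz1 _ (Finset.mem_image_of_mem _ (Finset.mem_filter.2 ⟨hab, h⟩))
    · intro h
      by_contra hna
      exact hz2 _ (Finset.mem_image_of_mem _ (Finset.mem_filter.2 ⟨hab, hna⟩)) h
  obtain ⟨q, hq1, hq2, -⟩ := p.insertPair (a := a) (b := z) (fun b' => hdom b') hzran hadj'
  exact ⟨q, hq1, z, hq2⟩

def PI.flip (p : PI G H) : PI H G :=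
  ⟨p.s.image (fun q => (q.2, q.1)),
   by
     intro a b b' ha hb
     obtain ⟨⟨x, y⟩, hxy, he⟩ := Finset.mem_image.1 ha
     obtain ⟨⟨x', y'⟩, hxy', he'⟩ := Finset.mem_image.1 hb
     obtain ⟨rfl, rfl⟩ := Prod.ext_iff.mp he
     obtain ⟨rfl, rfl⟩ := Prod.ext_iff.mp he'
     exact p.inj hxy hxy',
   by
     intro a a' b ha hb
     obtain ⟨⟨x, y⟩, hxy, he⟩ := Finset.mem_image.1 ha
     obtain ⟨⟨x', y'⟩, hxy', he'⟩ := Finset.mem_image.1 hb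
     obtain ⟨rfl, rfl⟩ := Prod.ext_iff.mp he
     obtain ⟨rfl, rfl⟩ := Prod.ext_iff.mp he'
     exact p.fn hxy hxy',
   by
     intro a b a' b' ha hb
     obtain ⟨⟨x, y⟩, hxy, he⟩ := Finset.mem_image.1 ha
     obtain ⟨⟨x', y'⟩, hxy', he'⟩ := Finset.mem_image.1 hb
     obtain ⟨rfl, rfl⟩ := Prod.ext_iff.mp he
     obtain ⟨rfl, rfl⟩ := Prod.ext_iff.mp he'
     exact (p.adj hxy hxy').symm⟩

lemma PI.mem_flip (p : PI G H) {a : α} {b : β} : (b, a) ∈ p.flip.s ↔ (a, b) ∈ p.s := by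
  constructor
  · intro h
    obtain ⟨⟨x, y⟩, hxy, he⟩ := Finset.mem_image.1 h
    obtain ⟨rfl, rfl⟩ := Prod.ext_iff.mp he
    exact hxy
  · intro h
    exact Finset.mem_image.2 ⟨(a, b), h, rfl⟩

lemma PI.extRan (hG : G.HasPropR) (p : PI G H) (b : β) :
    ∃ q : PI G H, p.s ⊆ q.s ∧ ∃ a, (a, b) ∈ q.s := by
  obtain ⟨q', hq1, a, ha⟩ := PI.extDom hG p.flip b
  refine ⟨q'.flip, ?_, a, ?_⟩
  · intro x hx
    have : (x.2, x.1) ∈ q'.s := hq1 ((p.mem_flip).2 (by simpa using hx))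
    simpa using (q'.mem_flip).2 this
  · exact (q'.mem_flip).2 ha

/-- generic chain construction handling countably many dense requirements -/
lemma exists_chain {I : Type*} [Countable I] [Nonempty I]
    (D : I → PI G H → Prop)
    (dense : ∀ (i : I) (p : PI G H), ∃ q : PI G H, p.s ⊆ q.s ∧ D i q) (p0 : PI G H) :
    ∃ f : ℕ → PI G H, (∀ n m, n ≤ m → (f n).s ⊆ (f m).s) ∧ ∀ i, ∃ n, D i (f n) := by
  obtain ⟨σ, hσ⟩ := exists_surjective_nat I
  let F : ℕ → PI G H := fun n => Nat.rec p0 (fun n p => (dense (σ n) p).choose) n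
  have hstep : ∀ n, (F n).s ⊆ (F (n+1)).s ∧ D (σ n) (F (n+1)) := by
    intro n
    exact ⟨(dense (σ n) (F n)).choose_spec.1, (dense (σ n) (F n)).choose_spec.2⟩
  refine ⟨F, ?_, ?_⟩
  · intro n m hnm
    induction m with
    | zero => rw [Nat.le_zero.1 hnm]
    | succ m ih =>
      rcases Nat.lt_or_ge n (m+1) with h | h
      · exact (ih (Nat.lt_succ_iff.1 h)).trans (hstep m).1
      · rw [Nat.le_antisymm hnm h]
  · intro i
    obtain ⟨n, rfl⟩ := hσ i
    exact ⟨n + 1, (hstep n).2⟩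

/-- limit of a chain of partial isomorphisms which is total and surjective -/
lemma limit_iso (f : ℕ → PI G H) (hmono : ∀ n m, n ≤ m → (f n).s ⊆ (f m).s)
    (htot : ∀ a, ∃ n b, (a, b) ∈ (f n).s) (hsur : ∀ b, ∃ n a, (a, b) ∈ (f n).s) :
    ∃ e : G ≃g H, ∀ n a b, (a, b) ∈ (f n).s → e a = b := by
  classical
  set Rel : α → β → Prop := fun a b => ∃ n, (a, b) ∈ (f n).s with hRel
  have hfn : ∀ ⦃a b b'⦄, Rel a b → Rel a b' → b = b' := by
    rintro a b b' ⟨n, hn⟩ ⟨m, hm⟩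
    exact (f (max n m)).fn (hmono n _ (le_max_left n m) hn) (hmono m _ (le_max_right n m) hm)
  have hinj : ∀ ⦃a a' b⦄, Rel a b → Rel a' b → a = a' := by
    rintro a a' b ⟨n, hn⟩ ⟨m, hm⟩
    exact (f (max n m)).inj (hmono n _ (le_max_left n m) hn) (hmono m _ (le_max_right n m) hm)
  have hadj : ∀ ⦃a b a' b'⦄, Rel a b → Rel a' b' → (G.Adj a a' ↔ H.Adj b b') := by
    rintro a b a' b' ⟨n, hn⟩ ⟨m, hm⟩
    exact (f (max n m)).adj (hmono n _ (le_max_left n m) hn) (hmono m _ (le_max_right n m) hm)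
  have htot' : ∀ a, ∃ b, Rel a b := fun a => by
    obtain ⟨n, b, h⟩ := htot a; exact ⟨b, n, h⟩
  have hsur' : ∀ b, ∃ a, Rel a b := fun b => by
    obtain ⟨n, a, h⟩ := hsur b; exact ⟨a, n, h⟩
  set F : α → β := fun a => (htot' a).choose with hF
  set Gi : β → α := fun b => (hsur' b).choose with hGi
  have hFrel : ∀ a, Rel a (F a) := fun a => (htot' a).choose_spec
  have hGrel : ∀ b, Rel (Gi b) b := fun b => (hsur' b).choose_spec
  have hleft : Function.LeftInverse Gi F := by
    intro a; exact hinj (hGrel (F a)) (hFrel a)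
  have hright : Function.RightInverse Gi F := by
    intro b; exact hfn (hFrel (Gi b)) (hGrel b)
  refine ⟨⟨⟨F, Gi, hleft, hright⟩, ?_⟩, ?_⟩
  · intro a a'
    exact (hadj (hFrel a) (hFrel a')).symm
  · intro n a b h
    exact hfn (hFrel a) ⟨n, h⟩

theorem iso_of_hasPropR {α β : Type*} [Countable α] [Countable β]
    {G : SimpleGraph α} {H : SimpleGraph β} (hG : G.HasPropR) (hH : H.HasPropR) :
    Nonempty (G ≃g H) := by
  classical
  have hα : Nonempty α := by
    obtain ⟨z, -⟩ := hG ∅ ∅ (by simp)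
    exact ⟨z⟩
  have : Nonempty (α ⊕ β) := ⟨Sum.inl hα.some⟩
  obtain ⟨f, hmono, hdone⟩ := exists_chain (G := G) (H := H)
    (fun i p => Sum.elim (fun a => ∃ b, (a, b) ∈ p.s) (fun b => ∃ a, (a, b) ∈ p.s) i)
    (by
      intro i p
      cases i with
      | inl a =>
        obtain ⟨q, h1, h2⟩ := PI.extDom hH p a
        exact ⟨q, h1, h2⟩
      | inr b =>
        obtain ⟨q, h1, h2⟩ := PI.extRan hG p b
        exact ⟨q, h1, h2⟩)
    PI.empty
  obtain ⟨e, he⟩ := limit_iso f hmono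
    (fun a => by obtain ⟨n, h⟩ := hdone (Sum.inl a); exact ⟨n, h⟩)
    (fun b => by obtain ⟨n, h⟩ := hdone (Sum.inr b); exact ⟨n, h⟩)
  exact ⟨e⟩

end PI

/-! ### Translations as graph automorphisms, and the free-product action -/

section Act

open Monoid

variable {Γ₁ Γ₂ : Type*} [Group Γ₁] [Group Γ₂]

def trIso (cd : Γ ↪ ℕ) (g : Γ) : gra cd ≃g gra cd :=
  ⟨⟨tr g, tr g⁻¹, fun x => by simp, fun x => by simp⟩, by
    intro a b
    exact adj_tr cd g a b⟩

@[simp] lemma trIso_apply (cd : Γ ↪ ℕ) (g : Γ) (x : Vt Γ) : trIso cd g x = tr g x := rfl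

def trHom (cd : Γ ↪ ℕ) : Γ →* (gra cd ≃g gra cd) where
  toFun := trIso cd
  map_one' := by
    apply RelIso.ext
    intro x
    simp [trIso]
  map_mul' := by
    intro g g'
    apply RelIso.ext
    intro x
    have : (trIso cd g * trIso cd g') x = trIso cd g (trIso cd g' x) := rfl
    rw [this]
    simp [mul_assoc]

@[simp] lemma trHom_apply (cd : Γ ↪ ℕ) (g : Γ) (x : Vt Γ) : trHom cd g x = tr g x := rfl

variable {α β : Type*} {G : SimpleGraph α} {H : SimpleGraph β}

/-- conjugation by a graph isomorphism, as a `MonoidHom` of automorphism groups -/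
def conjHom (e : G ≃g H) : (G ≃g G) →* (H ≃g H) where
  toFun f := (e.symm.trans f).trans e
  map_one' := by
    apply RelIso.ext
    intro x
    have : ((e.symm.trans (1 : G ≃g G)).trans e) x = e ((1 : G ≃g G) (e.symm x)) := rfl
    rw [this]
    have h1 : ((1 : G ≃g G) (e.symm x)) = e.symm x := rfl
    rw [h1]
    simp
  map_mul' := by
    intro f g
    apply RelIso.ext
    intro x
    have h1 : ((e.symm.trans (f * g)).trans e) x = e ((f * g) (e.symm x)) := rfl
    have h2 : (f * g) (e.symm x) = f (g (e.symm x)) := rfl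
    have h3 : (((e.symm.trans f).trans e) * ((e.symm.trans g).trans e)) x
        = e (f (e.symm (e (g (e.symm x))))) := rfl
    have h4 : e.symm (e (g (e.symm x))) = g (e.symm x) := e.symm_apply_apply _
    rw [h1, h2, h3, h4]

@[simp] lemma conjHom_apply (e : G ≃g H) (f : G ≃g G) (x : β) :
    conjHom e f x = e (f (e.symm x)) := rfl

lemma conjHom_injective (e : G ≃g H) : Function.Injective (conjHom e) := by
  intro f g h
  apply RelIso.ext
  intro x
  have := congrArg (fun φ : H ≃g H => e.symm (φ (e x))) h
  simpa using this

variable (cd₁ : Γ₁ ↪ ℕ) (cd₂ : Γ₂ ↪ ℕ)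

/-- the full action of the free product induced by an isomorphism `e : F ≃g E`. -/
def rho (e : gra cd₂ ≃g gra cd₁) : Coprod Γ₁ Γ₂ →* (gra cd₁ ≃g gra cd₁) :=
  Coprod.lift (trHom cd₁) ((conjHom e).comp (trHom cd₂))

lemma rho_inl (e : gra cd₂ ≃g gra cd₁) (g : Γ₁) (x : Vt Γ₁) :
    rho cd₁ cd₂ e (Coprod.inl g) x = tr g x := by
  rw [rho, Coprod.lift_apply_inl]
  rfl

lemma rho_inr (e : gra cd₂ ≃g gra cd₁) (k : Γ₂) (x : Vt Γ₁) :
    rho cd₁ cd₂ e (Coprod.inr k) x = e (tr k (e.symm x)) := by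
  rw [rho, Coprod.lift_apply_inr]
  rfl

/-! ### Words and reduction -/

def emb : Γ₁ ⊕ Γ₂ → Coprod Γ₁ Γ₂ := Sum.elim (fun g => Coprod.inl g) (fun k => Coprod.inr k)

def prodEmb (L : List (Γ₁ ⊕ Γ₂)) : Coprod Γ₁ Γ₂ := (L.map emb).prod

@[simp] lemma prodEmb_nil : prodEmb ([] : List (Γ₁ ⊕ Γ₂)) = 1 := rfl

@[simp] lemma prodEmb_cons (l : Γ₁ ⊕ Γ₂) (L : List (Γ₁ ⊕ Γ₂)) :
    prodEmb (l :: L) = emb l * prodEmb L := by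
  simp [prodEmb]

def stp : (Γ₁ ⊕ Γ₂) → List (Γ₁ ⊕ Γ₂) → List (Γ₁ ⊕ Γ₂)
  | .inl g, .inl g' :: t => if g * g' = 1 then t else .inl (g * g') :: t
  | .inr k, .inr k' :: t => if k * k' = 1 then t else .inr (k * k') :: t
  | .inl g, acc => if g = 1 then acc else .inl g :: acc
  | .inr k, acc => if k = 1 then acc else .inr k :: acc

def red (L : List (Γ₁ ⊕ Γ₂)) : List (Γ₁ ⊕ Γ₂) := L.foldr stp []

lemma prodEmb_stp (l : Γ₁ ⊕ Γ₂) (acc : List (Γ₁ ⊕ Γ₂)) :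
    prodEmb (stp l acc) = emb l * prodEmb acc := by
  rcases l with g | k <;> rcases acc with _ | ⟨hd, t⟩
  · simp only [stp]
    split_ifs with h
    · simp [emb, h]
    · simp
  · rcases hd with g' | k'
    · simp only [stp]
      split_ifs with h
      · simp only [prodEmb_cons]
        rw [← mul_assoc]
        have : emb (Sum.inl g : Γ₁ ⊕ Γ₂) * emb (Sum.inl g' : Γ₁ ⊕ Γ₂) = Coprod.inl (g * g') := by
          simp [emb]
        rw [this, h, map_one, one_mul]
      · simp only [prodEmb_cons]
        rw [← mul_assoc]
        congr 1
        simp [emb]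
    · simp only [stp]
      split_ifs with h
      · simp [emb, h]
      · simp
  · simp only [stp]
    split_ifs with h
    · simp [emb, h]
    · simp
  · rcases hd with g' | k'
    · simp only [stp]
      split_ifs with h
      · simp [emb, h]
      · simp
    · simp only [stp]
      split_ifs with h
      · simp only [prodEmb_cons]
        rw [← mul_assoc]
        have : emb (Sum.inr k : Γ₁ ⊕ Γ₂) * emb (Sum.inr k' : Γ₁ ⊕ Γ₂) = Coprod.inr (k * k') := by
          simp [emb]
        rw [this, h, map_one, one_mul]
      · simp only [prodEmb_cons]
        rw [← mul_assoc]
        congr 1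
        simp [emb]

lemma prodEmb_red (L : List (Γ₁ ⊕ Γ₂)) : prodEmb (red L) = prodEmb L := by
  induction L with
  | nil => rfl
  | cons l t ih =>
    rw [prodEmb_cons, ← ih]
    exact prodEmb_stp l (red t)

def Ok (L : List (Γ₁ ⊕ Γ₂)) : Prop :=
  List.Chain' (fun a b => a.isLeft ≠ b.isLeft) L ∧
    ∀ l ∈ L, l ≠ Sum.inl 1 ∧ l ≠ Sum.inr 1

lemma ok_nil : Ok ([] : List (Γ₁ ⊕ Γ₂)) := ⟨List.isChain_nil, by simp⟩

lemma ok_stp (l : Γ₁ ⊕ Γ₂) (acc : List (Γ₁ ⊕ Γ₂)) (h : Ok acc) : Ok (stp l acc) := by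
  obtain ⟨hc, hnt⟩ := h
  rcases l with g | k <;> rcases acc with _ | ⟨hd, t⟩
  · simp only [stp]
    split_ifs with h
    · exact ⟨hc, hnt⟩
    · refine ⟨List.isChain_singleton _, ?_⟩
      intro l hl
      simp at hl
      subst hl
      exact ⟨by simp [h], by simp [h]⟩
  · rcases hd with g' | k'
    · simp only [stp]
      split_ifs with h
      · exact ⟨hc.tail, fun l hl => hnt l (List.mem_cons_of_mem _ hl)⟩
      · constructor
        · unfold List.Chain' at hc ⊢; rw [List.isChain_cons] at hc ⊢
          refine ⟨?_, hc.2⟩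
          intro y hy
          exact hc.1 y hy
        · intro l hl
          rcases List.mem_cons.1 hl with rfl | hl
          · exact ⟨by simp [h], by simp [h]⟩
          · exact hnt l (List.mem_cons_of_mem _ hl)
    · simp only [stp]
      split_ifs with h
      · exact ⟨hc, hnt⟩
      · constructor
        · unfold List.Chain'; rw [List.isChain_cons_cons]
          exact ⟨by simp, hc⟩
        · intro l hl
          rcases List.mem_cons.1 hl with rfl | hl
          · exact ⟨by simp [h], by simp [h]⟩
          · exact hnt l hl
  · simp only [stp]
    split_ifs with h
    · exact ⟨hc, hnt⟩
    · refine ⟨List.isChain_singleton _, ?_⟩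
      intro l hl
      simp at hl
      subst hl
      exact ⟨by simp [h], by simp [h]⟩
  · rcases hd with g' | k'
    · simp only [stp]
      split_ifs with h
      · exact ⟨hc, hnt⟩
      · constructor
        · unfold List.Chain'; rw [List.isChain_cons_cons]
          exact ⟨by simp, hc⟩
        · intro l hl
          rcases List.mem_cons.1 hl with rfl | hl
          · exact ⟨by simp [h], by simp [h]⟩
          · exact hnt l hl
    · simp only [stp]
      split_ifs with h
      · exact ⟨hc.tail, fun l hl => hnt l (List.mem_cons_of_mem _ hl)⟩
      · constructor
        · unfold List.Chain' at hc ⊢; rw [List.isChain_cons] at hc ⊢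
          refine ⟨?_, hc.2⟩
          intro y hy
          exact hc.1 y hy
        · intro l hl
          rcases List.mem_cons.1 hl with rfl | hl
          · exact ⟨by simp [h], by simp [h]⟩
          · exact hnt l (List.mem_cons_of_mem _ hl)

lemma ok_red (L : List (Γ₁ ⊕ Γ₂)) : Ok (red L) := by
  induction L with
  | nil => exact ok_nil
  | cons l t ih => exact ok_stp l (red t) ih

/-- evaluation of a word of letters on a vertex, given the iso `e`. -/
def evalL (e : gra cd₂ ≃g gra cd₁) (L : List (Γ₁ ⊕ Γ₂)) (x : Vt Γ₁) : Vt Γ₁ :=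
  L.foldr (fun l y => Sum.elim (fun g => tr g y) (fun k => e (tr k (e.symm y))) l) x

@[simp] lemma evalL_nil (e : gra cd₂ ≃g gra cd₁) (x : Vt Γ₁) : evalL cd₁ cd₂ e [] x = x := rfl

lemma evalL_cons (e : gra cd₂ ≃g gra cd₁) (l : Γ₁ ⊕ Γ₂) (L : List (Γ₁ ⊕ Γ₂)) (x : Vt Γ₁) :
    evalL cd₁ cd₂ e (l :: L) x
      = Sum.elim (fun g => tr g (evalL cd₁ cd₂ e L x))
          (fun k => e (tr k (e.symm (evalL cd₁ cd₂ e L x)))) l := rfl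

lemma evalL_append (e : gra cd₂ ≃g gra cd₁) (L : List (Γ₁ ⊕ Γ₂)) (a : Γ₁ ⊕ Γ₂) (x : Vt Γ₁) :
    evalL cd₁ cd₂ e (L ++ [a]) x
      = evalL cd₁ cd₂ e L (evalL cd₁ cd₂ e [a] x) := by
  simp [evalL, List.foldr_append]

lemma rho_prodEmb (e : gra cd₂ ≃g gra cd₁) (L : List (Γ₁ ⊕ Γ₂)) (x : Vt Γ₁) :
    rho cd₁ cd₂ e (prodEmb L) x = evalL cd₁ cd₂ e L x := by
  induction L with
  | nil =>
    rw [prodEmb_nil, map_one]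
    rfl
  | cons l t ih =>
    rw [prodEmb_cons, map_mul]
    have : (rho cd₁ cd₂ e (emb l) * rho cd₁ cd₂ e (prodEmb t)) x
        = rho cd₁ cd₂ e (emb l) (rho cd₁ cd₂ e (prodEmb t) x) := rfl
    rw [this, ih, evalL_cons]
    rcases l with g | k
    · simp [emb, rho_inl]
    · simp [emb, rho_inr]

lemma prodEmb_append (L₁ L₂ : List (Γ₁ ⊕ Γ₂)) :
    prodEmb (L₁ ++ L₂) = prodEmb L₁ * prodEmb L₂ := by
  simp [prodEmb]

lemma exists_list (γ : Coprod Γ₁ Γ₂) : ∃ L : List (Γ₁ ⊕ Γ₂), prodEmb L = γ := by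
  induction γ using Coprod.induction_on with
  | inl m => exact ⟨[Sum.inl m], by simp [prodEmb, emb]⟩
  | inr m => exact ⟨[Sum.inr m], by simp [prodEmb, emb]⟩
  | mul x y hx hy =>
    obtain ⟨L₁, h₁⟩ := hx
    obtain ⟨L₂, h₂⟩ := hy
    exact ⟨L₁ ++ L₂, by rw [prodEmb_append, h₁, h₂]⟩

end Act

/-! ### The forcing construction -/

section Forcing

variable {Γ₁ Γ₂ : Type*} [Group Γ₁] [Group Γ₂] (cd₁ : Γ₁ ↪ ℕ) (cd₂ : Γ₂ ↪ ℕ)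

/-- `Ext e p`: the isomorphism `e` extends the finite partial isomorphism `p`. -/
def Ext (e : gra cd₂ ≃g gra cd₁) (p : PI (gra cd₂) (gra cd₁)) : Prop :=
  ∀ ⦃w v⦄, (w, v) ∈ p.s → e w = v

lemma Ext.mono {e : gra cd₂ ≃g gra cd₁} {p q : PI (gra cd₂) (gra cd₁)}
    (h : Ext cd₁ cd₂ e q) (hpq : p.s ⊆ q.s) : Ext cd₁ cd₂ e p :=
  fun _ _ hw => h (hpq hw)

lemma Ext.symm_eq {e : gra cd₂ ≃g gra cd₁} {p : PI (gra cd₂) (gra cd₁)}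
    (h : Ext cd₁ cd₂ e p) {w v} (hw : (w, v) ∈ p.s) : e.symm v = w := by
  have := h hw
  rw [← this]
  exact e.toEquiv.symm_apply_apply w

def Bnd (p : PI (gra cd₂) (gra cd₁)) (B : ℕ) : Prop :=
  ∀ q ∈ p.s, q.1.2.1 ≤ B ∧ q.2.2.1 ≤ B

lemma Bnd.mono {p : PI (gra cd₂) (gra cd₁)} {B B' : ℕ} (h : Bnd cd₁ cd₂ p B) (hB : B ≤ B') :
    Bnd cd₁ cd₂ p B' := fun q hq => ⟨(h q hq).1.trans hB, (h q hq).2.trans hB⟩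

lemma exists_bnd (p : PI (gra cd₂) (gra cd₁)) : ∃ B, Bnd cd₁ cd₂ p B := by
  refine ⟨p.s.sup (fun q => max q.1.2.1 q.2.2.1), fun q hq => ?_⟩
  have h2 : max q.1.2.1 q.2.2.1 ≤ _ :=
    Finset.le_sup (f := fun q : Vt Γ₂ × Vt Γ₁ => max q.1.2.1 q.2.2.1) hq
  omega

/-- the key single-step extension realizing one `Γ₂`-letter on a vertex `x`
which is not yet in the range. -/
lemma step_inr (p : PI (gra cd₂) (gra cd₁)) (B : ℕ) (hB : Bnd cd₁ cd₂ p B)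
    (x : Vt Γ₁) (hx : x.2.1 ≤ B) (hxr : ∀ w, (w, x) ∉ p.s) (k : Γ₂) (hk : k ≠ 1) :
    ∃ q : PI (gra cd₂) (gra cd₁), p.s ⊆ q.s ∧ ∃ z : Vt Γ₁, z.2.1 = B + 2 ∧
      Bnd cd₁ cd₂ q (B + 2) ∧
      (∀ w v, (w, v) ∈ q.s → v.2.1 = z.2.1 → v = z) ∧
      (∀ e, Ext cd₁ cd₂ e q → e (tr k (e.symm x)) = z) := by
  classical
  -- choose w
  obtain ⟨w, hw1, hw2, hwadj⟩ := exists_ext cd₂ (p.s.image Prod.fst)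
    (fun t => ∃ v, (t, v) ∈ p.s ∧ (gra cd₁).Adj x v) B
    (by
      intro t ht
      obtain ⟨⟨t', v⟩, hq, rfl⟩ := Finset.mem_image.1 ht
      exact (hB _ hq).1) 1
  set w' : Vt Γ₂ := tr k w with hw'
  have hw'1 : w'.1 = k := by rw [hw', tr_fst, hw1, mul_one]
  have hw'2 : w'.2.1 = B + 1 := hw2
  have hww' : w ≠ w' := by
    intro h
    apply hk
    rw [h] at hw1
    rw [hw'1] at hw1
    exact hw1.symm ▸ hw1
  -- choose z
  obtain ⟨z, hz1, hz2, hzadj⟩ := exists_ext cd₁ (insert x (p.s.image Prod.snd))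
    (fun v => ∃ t, (t, v) ∈ p.s ∧ (gra cd₂).Adj w' t) (B + 1)
    (by
      intro v hv
      rcases Finset.mem_insert.1 hv with rfl | hv
      · omega
      · obtain ⟨⟨t, v'⟩, hq, rfl⟩ := Finset.mem_image.1 hv
        exact le_trans (hB _ hq).2 (by omega)) 1
  -- insert (w', z)
  obtain ⟨q₁, hq₁sub, hq₁mem, hq₁s⟩ := p.insertPair (a := w') (b := z)
    (by
      intro v hv
      have h2 : w'.2.1 ≤ B := (hB _ hv).1
      omega)
    (by
      intro t ht
      have h2 : z.2.1 ≤ B := (hB _ ht).2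
      omega)
    (by
      intro t v htv
      have hzv : (gra cd₁).Adj z v ↔ ∃ t', (t', v) ∈ p.s ∧ (gra cd₂).Adj w' t' :=
        hzadj v (Finset.mem_insert_of_mem (Finset.mem_image_of_mem _ htv))
      constructor
      · intro h
        exact hzv.2 ⟨t, htv, h⟩
      · intro h
        obtain ⟨t', ht', hadj⟩ := hzv.1 h
        have : t' = t := p.inj ht' htv
        rwa [this] at hadj)
  -- insert (w, x)
  obtain ⟨q₂, hq₂sub, hq₂mem, hq₂s⟩ := q₁.insertPair (a := w) (b := x)
    (by
      intro v hv
      rcases hq₁s _ hv with h | h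
      · exact hww' (by rw [Prod.ext_iff] at h; exact h.1)
      · have h2 : w.2.1 ≤ B := (hB _ h).1
        omega)
    (by
      intro t ht
      rcases hq₁s _ ht with h | h
      · have h2 : x = z := (Prod.ext_iff.mp h).2
        have : x.2.1 = B + 2 := by rw [h2]; omega
        omega
      · exact hxr _ h)
    (by
      intro t v htv
      rcases hq₁s _ htv with h | h
      · have h1 : t = w' := (Prod.ext_iff.mp h).1
        have h2 : v = z := (Prod.ext_iff.mp h).2
        rw [h1, h2]
        constructor
        · intro hadj
          exact absurd hadj (not_adj_lvl_eq cd₂ (by rw [hw'2, hw2]))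
        · intro hadj
          exfalso
          have h3 := hzadj x (Finset.mem_insert_self _ _)
          obtain ⟨t', ht', -⟩ := h3.1 ((gra cd₁).adj_symm hadj)
          exact hxr _ ht'
      · have hwt : (gra cd₂).Adj w t ↔ ∃ v', (t, v') ∈ p.s ∧ (gra cd₁).Adj x v' :=
          hwadj t (Finset.mem_image_of_mem _ h)
        constructor
        · intro hadj
          obtain ⟨v', hv', hadj'⟩ := hwt.1 hadj
          have : v' = v := p.fn hv' h
          rwa [this] at hadj'
        · intro hadj
          exact hwt.2 ⟨v, h, hadj⟩)
  refine ⟨q₂, ?_, z, hz2, ?_, ?_, ?_⟩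
  · intro a ha
    exact hq₂sub (hq₁sub ha)
  · intro q hq
    rcases hq₂s _ hq with h | h
    · have h1 : q.1 = w := congrArg Prod.fst h
      have h2 : q.2 = x := congrArg Prod.snd h
      rw [h1, h2]
      constructor
      · have : w.2.1 = B + 1 := hw2
        omega
      · omega
    · rcases hq₁s _ h with h2 | h2
      · have h3 : q.1 = w' := congrArg Prod.fst h2
        have h4 : q.2 = z := congrArg Prod.snd h2
        rw [h3, h4]
        constructor
        · have : w'.2.1 = B + 1 := hw'2
          omega
        · omega
      · exact ⟨(hB _ h2).1.trans (by omega), (hB _ h2).2.trans (by omega)⟩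
  · intro w₀ v₀ hwv hlvl
    rcases hq₂s _ hwv with h | h
    · have h2 : v₀ = x := (Prod.ext_iff.mp h).2
      rw [h2] at hlvl
      rw [hz2] at hlvl
      omega
    · rcases hq₁s _ h with h2 | h2
      · exact (Prod.ext_iff.mp h2).2
      · have h3 : v₀.2.1 ≤ B := (hB _ h2).2
        rw [hz2] at hlvl
        omega
  · intro e he
    have hew : e w = x := he hq₂mem
    have hew' : e w' = z := he (hq₂sub hq₁mem)
    have hsymm : e.symm x = w := by
      rw [← hew]
      exact e.toEquiv.symm_apply_apply w
    rw [hsymm, ← hw', hew']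

/-- the trajectory lemma: any alternating nontrivial word can be forced to move a
suitably fresh vertex to a recognizable place. -/
lemma traj : ∀ (L : List (Γ₁ ⊕ Γ₂)), Ok L →
    ∀ (p : PI (gra cd₂) (gra cd₁)) (B : ℕ) (x : Vt Γ₁), Bnd cd₁ cd₂ p B → x.2.1 ≤ B →
    ((∃ g : Γ₁, L.getLast? = some (Sum.inl g)) →
        ∀ w v, (w, v) ∈ p.s → v.2.1 = x.2.1 → v = x) →
    ((∃ k : Γ₂, L.getLast? = some (Sum.inr k)) → ∀ w, (w, x) ∉ p.s) →
    ∃ (q : PI (gra cd₂) (gra cd₁)) (B' : ℕ) (x' : Vt Γ₁),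
      p.s ⊆ q.s ∧ Bnd cd₁ cd₂ q B' ∧ B ≤ B' ∧ x'.2.1 ≤ B' ∧
      (∀ e, Ext cd₁ cd₂ e q → evalL cd₁ cd₂ e L x = x') ∧
      ((∃ k : Γ₂, Sum.inr k ∈ L) → B < x'.2.1) ∧
      (L = [] → x' = x) ∧
      ((∀ l ∈ L, l.isLeft = true) → ∃ g : Γ₁, x' = tr g x ∧ (L ≠ [] → x' ≠ x)) := by
  intro L
  induction L using List.reverseRecOn with
  | nil =>
    intro _ p B x hB hx _ _
    exact ⟨p, B, x, Finset.Subset.refl _, hB, le_rfl, hx, fun e _ => rfl, by simp,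
      fun _ => rfl, fun _ => ⟨1, by simp, fun h => absurd rfl h⟩⟩
  | append_singleton L a ih =>
    intro hok p B x hB hx hU hR
    have hokL : Ok L :=
      ⟨(List.isChain_append.1 hok.1).1, fun l hl => hok.2 l (List.mem_append.2 (Or.inl hl))⟩
    have hrel : ∀ l₀ ∈ L.getLast?, l₀.isLeft ≠ a.isLeft := by
      intro l₀ hl₀
      exact (List.isChain_append.1 hok.1).2.2 l₀ hl₀ a rfl
    have hlast : (L ++ [a]).getLast? = some a := List.getLast?_concat
    have haNT : a ≠ Sum.inl 1 ∧ a ≠ Sum.inr 1 := hok.2 a (List.mem_append.2 (Or.inr (by simp)))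
    have hnenil : L ++ [a] ≠ [] := by simp
    rcases a with g | k
    · -- first letter applied is a translation
      have hg : g ≠ 1 := fun h => haNT.1 (by rw [h])
      set y : Vt Γ₁ := tr g x with hy
      have hylvl : y.2.1 = x.2.1 := rfl
      have hyx : y ≠ x := by
        intro h
        apply hg
        have : g * x.1 = x.1 := congrArg Prod.fst h
        exact mul_eq_right.1 this
      have hUx : ∀ w v, (w, v) ∈ p.s → v.2.1 = x.2.1 → v = x :=
        hU ⟨g, hlast⟩
      have hyran : ∀ w, (w, y) ∉ p.s := by
        intro w hw
        exact hyx (hUx w y hw hylvl)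
      obtain ⟨q, B', x', hsub, hBq, hBB, hx'l, heval, hC4, hC0, hC5⟩ :=
        ih hokL p B y hB (by rw [hylvl]; exact hx)
          (by
            rintro ⟨g', hg'⟩
            exfalso
            exact hrel _ hg' (by simp))
          (fun _ => hyran)
      refine ⟨q, B', x', hsub, hBq, hBB, hx'l, ?_, ?_, fun h => absurd h hnenil, ?_⟩
      · intro e he
        rw [evalL_append]
        exact heval e he
      · rintro ⟨k, hk⟩
        rcases List.mem_append.1 hk with h | h
        · exact hC4 ⟨k, h⟩
        · simp at h
      · intro hall
        have hallL : ∀ l ∈ L, l.isLeft = true :=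
          fun l hl => hall l (List.mem_append.2 (Or.inl hl))
        have hLnil : L = [] := by
          by_contra hL
          have h1 : L.getLast? = some (L.getLast hL) := List.getLast?_eq_getLast_of_ne_nil hL
          have h2 := hrel _ h1
          have h3 := hallL _ (List.getLast_mem hL)
          rw [h3] at h2
          simp at h2
        have hx'y : x' = y := hC0 hLnil
        exact ⟨g, by rw [hx'y], fun _ => by rw [hx'y]; exact hyx⟩
    · -- first letter applied is a Γ₂-letter
      have hk : k ≠ 1 := fun h => haNT.2 (by rw [h])
      have hxran : ∀ w, (w, x) ∉ p.s := hR ⟨k, hlast⟩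
      obtain ⟨q, hsub, z, hzlvl, hBq, hUz, hez⟩ := step_inr cd₁ cd₂ p B hB x hx hxran k hk
      obtain ⟨q', B', x', hsub', hBq', hBB', hx'l, heval, hC4, hC0, hC5⟩ :=
        ih hokL q (B + 2) z hBq (by omega)
          (fun _ => fun w v hwv hl => hUz w v hwv (by rw [hl, hzlvl]))
          (by
            rintro ⟨k', hk'⟩
            exfalso
            exact hrel _ hk' (by simp))
      refine ⟨q', B', x', fun a ha => hsub' (hsub ha), hBq', by omega, hx'l, ?_,
        ?_, fun h => absurd h hnenil, ?_⟩
      · intro e he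
        rw [evalL_append]
        have h1 : evalL cd₁ cd₂ e [Sum.inr k] x = e (tr k (e.symm x)) := rfl
        rw [h1, hez e (Ext.mono cd₁ cd₂ he hsub')]
        exact heval e he
      · intro _
        rcases Classical.em (∃ k' : Γ₂, (Sum.inr k' : Γ₁ ⊕ Γ₂) ∈ L) with hinr | hinr
        · have h2 := hC4 hinr
          omega
        · by_cases hLnil : L = []
          · have := hC0 hLnil
            rw [this]
            omega
          · have hall : ∀ l ∈ L, l.isLeft = true := by
              intro l hl
              rcases l with g' | k'
              · rfl
              · exact absurd ⟨k', hl⟩ hinr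
            obtain ⟨g', hx', -⟩ := hC5 hall
            have h3 : x'.2.1 = z.2.1 := by rw [hx']; rfl
            omega
      · intro hall
        exfalso
        have := hall (Sum.inr k) (List.mem_append.2 (Or.inr (by simp)))
        simp at this

/-- handler for the faithfulness tasks -/
lemma handler_t4 (p : PI (gra cd₂) (gra cd₁)) (L : List (Γ₁ ⊕ Γ₂)) :
    ∃ q : PI (gra cd₂) (gra cd₁), p.s ⊆ q.s ∧
      (red L = [] ∨ ∃ v x' : Vt Γ₁, v ≠ x' ∧
        ∀ e, Ext cd₁ cd₂ e q → evalL cd₁ cd₂ e (red L) v = x') := by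
  classical
  by_cases hred : red L = []
  · exact ⟨p, Finset.Subset.refl _, Or.inl hred⟩
  obtain ⟨B₀, hB₀⟩ := exists_bnd cd₁ cd₂ p
  set v₀ : Vt Γ₁ := (1, B₀ + 1, ∅) with hv₀
  have hv₀l : v₀.2.1 = B₀ + 1 := rfl
  obtain ⟨q, B', x', hsub, hBq, hBB, hx'l, heval, hC4, hC0, hC5⟩ :=
    traj cd₁ cd₂ (red L) (ok_red L) p (B₀ + 1) v₀
      (Bnd.mono cd₁ cd₂ hB₀ (by omega)) (by omega)
      (by
        intro _ w v hwv hl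
        exfalso
        have h2 : v.2.1 ≤ B₀ := (hB₀ _ hwv).2
        rw [hv₀l] at hl
        omega)
      (by
        intro _ w hw
        have h2 : (B₀ + 1 : ℕ) ≤ B₀ := (hB₀ _ hw).2
        omega)
  refine ⟨q, hsub, Or.inr ⟨v₀, x', ?_, heval⟩⟩
  rcases Classical.em (∃ k : Γ₂, (Sum.inr k : Γ₁ ⊕ Γ₂) ∈ red L) with hinr | hinr
  · have := hC4 hinr
    intro h
    rw [← h] at this
    rw [hv₀l] at this
    omega
  · have hall : ∀ l ∈ red L, l.isLeft = true := by
      intro l hl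
      rcases l with g' | k'
      · rfl
      · exact absurd ⟨k', hl⟩ hinr
    obtain ⟨g, -, hne⟩ := hC5 hall
    exact fun h => (hne hred) h.symm

/-- a finite partial isomorphism pattern of the graph `gra cd₁` -/
def Good (S : Finset (Vt Γ₁ × Vt Γ₁)) : Prop :=
  (∀ ⦃u x x'⦄, (u, x) ∈ S → (u, x') ∈ S → x = x') ∧
  (∀ ⦃u u' x⦄, (u, x) ∈ S → (u', x) ∈ S → u = u') ∧
  (∀ ⦃u x v y⦄, (u, x) ∈ S → (v, y) ∈ S → ((gra cd₁).Adj u v ↔ (gra cd₁).Adj x y))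

/-- handler for the homogeneity tasks -/
lemma handler_t3 [Infinite Γ₁] [Infinite Γ₂] (p : PI (gra cd₂) (gra cd₁))
    (S : Finset (Vt Γ₁ × Vt Γ₁)) :
    ∃ q : PI (gra cd₂) (gra cd₁), p.s ⊆ q.s ∧
      (Good cd₁ S → ∃ (g h : Γ₁) (k : Γ₂), ∀ ux ∈ S, ∃ m s,
        (((1 : Γ₂), m, s), tr g ux.1) ∈ q.s ∧ (((k : Γ₂), m, s), tr (g * h) ux.2) ∈ q.s) := by
  classical
  by_cases hGood : Good cd₁ S
  case neg => exact ⟨p, Finset.Subset.refl _, fun h => absurd h hGood⟩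
  obtain ⟨B₁, hB₁⟩ := exists_bnd cd₁ cd₂ p
  set B₀ : ℕ := max B₁ (S.sup fun ux => max ux.1.2.1 ux.2.2.1) with hB₀def
  have hB₀p : Bnd cd₁ cd₂ p B₀ := Bnd.mono cd₁ cd₂ hB₁ (le_max_left _ _)
  have hB₀S : ∀ ux ∈ S, ux.1.2.1 ≤ B₀ ∧ ux.2.2.1 ≤ B₀ := by
    intro ux hux
    have h2 : max ux.1.2.1 ux.2.2.1 ≤ _ :=
      Finset.le_sup (f := fun ux : Vt Γ₁ × Vt Γ₁ => max ux.1.2.1 ux.2.2.1) hux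
    constructor
    · exact le_trans (le_trans (le_max_left _ _) h2) (le_max_right _ _)
    · exact le_trans (le_trans (le_max_right _ _) h2) (le_max_right _ _)
  -- choose k
  have hbadK : Set.Finite {k : Γ₂ | ∃ a ∈ p.s, ∃ b ∈ p.s, tr k a.1 = b.1} := by
    apply Set.Finite.subset
      (((p.s ×ˢ p.s).finite_toSet).image (fun ab => ab.2.1.1 * ab.1.1.1⁻¹))
    rintro k ⟨a, ha, b, hb, hab⟩
    refine ⟨(a, b), by simp [ha, hb], ?_⟩
    have h1 : k * a.1.1 = b.1.1 := congrArg Prod.fst hab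
    simp only
    rw [← h1]
    group
  obtain ⟨k, hkmem⟩ := ((hbadK.union (Set.finite_singleton 1)).infinite_compl).nonempty
  have hk1 : k ≠ 1 := by
    intro h
    exact hkmem (Or.inr (by rw [h]; rfl))
  have hkdom : ∀ a ∈ p.s, ∀ b ∈ p.s, tr k a.1 ≠ b.1 := by
    intro a ha b hb h
    exact hkmem (Or.inl ⟨a, ha, b, hb, h⟩)
  -- choose h
  have hbadH : Set.Finite ({h : Γ₁ | ∃ ux ∈ S, ∃ vy ∈ S, (gra cd₁).Adj ux.1 (tr h vy.2)} ∪
      {h : Γ₁ | ∃ ux ∈ S, ∃ vy ∈ S, ux.1 = tr h vy.2}) := by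
    apply Set.Finite.union
    · apply Set.Finite.subset
        (Set.Finite.biUnion ((S ×ˢ S).finite_toSet)
          (fun q _ => finite_adj_tr cd₁ q.1.1 q.2.2))
      rintro h ⟨ux, hux, vy, hvy, hadj⟩
      exact Set.mem_biUnion (x := ((ux, vy) : (Vt Γ₁ × Vt Γ₁) × (Vt Γ₁ × Vt Γ₁)))
        (by simp [hux, hvy]) hadj
    · apply Set.Finite.subset
        (((S ×ˢ S).finite_toSet).image (fun q => q.1.1.1 * q.2.2.1⁻¹))
      rintro h ⟨ux, hux, vy, hvy, heq⟩
      refine ⟨(ux, vy), by simp [hux, hvy], ?_⟩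
      have h1 : ux.1.1 = h * vy.2.1 := congrArg Prod.fst heq
      simp only
      rw [h1]
      group
  obtain ⟨h, hhmem⟩ := (hbadH.infinite_compl).nonempty
  have hF1 : ∀ ux ∈ S, ∀ vy ∈ S, ¬ (gra cd₁).Adj ux.1 (tr h vy.2) := by
    intro ux hux vy hvy hadj
    exact hhmem (Or.inl ⟨ux, hux, vy, hvy, hadj⟩)
  have hF2 : ∀ ux ∈ S, ∀ vy ∈ S, ux.1 ≠ tr h vy.2 := by
    intro ux hux vy hvy heq
    exact hhmem (Or.inr ⟨ux, hux, vy, hvy, heq⟩)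
  -- choose g
  have hbadG : Set.Finite ({g : Γ₁ | ∃ ux ∈ S, ∃ b ∈ p.s, tr g ux.1 = b.2} ∪
      {g : Γ₁ | ∃ ux ∈ S, ∃ b ∈ p.s, tr (g * h) ux.2 = b.2}) := by
    apply Set.Finite.union
    · apply Set.Finite.subset
        (((S ×ˢ p.s).finite_toSet).image (fun q => q.2.2.1 * q.1.1.1⁻¹))
      rintro g ⟨ux, hux, b, hb, heq⟩
      refine ⟨(ux, b), by simp [hux, hb], ?_⟩
      have h1 : g * ux.1.1 = b.2.1 := congrArg Prod.fst heq
      simp only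
      rw [← h1]
      group
    · apply Set.Finite.subset
        (((S ×ˢ p.s).finite_toSet).image (fun q => q.2.2.1 * q.1.2.1⁻¹ * h⁻¹))
      rintro g ⟨ux, hux, b, hb, heq⟩
      refine ⟨(ux, b), by simp [hux, hb], ?_⟩
      have h1 : g * h * ux.2.1 = b.2.1 := congrArg Prod.fst heq
      simp only
      rw [← h1]
      group
  obtain ⟨g, hgmem⟩ := (hbadG.infinite_compl).nonempty
  have hG1 : ∀ ux ∈ S, ∀ b ∈ p.s, tr g ux.1 ≠ b.2 := by
    intro ux hux b hb heq
    exact hgmem (Or.inl ⟨ux, hux, b, hb, heq⟩)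
  have hG2 : ∀ ux ∈ S, ∀ b ∈ p.s, tr (g * h) ux.2 ≠ b.2 := by
    intro ux hux b hb heq
    exact hgmem (Or.inr ⟨ux, hux, b, hb, heq⟩)
  -- the inner induction
  have inner : ∀ S' : Finset (Vt Γ₁ × Vt Γ₁), S' ⊆ S → ∃ (q : PI (gra cd₂) (gra cd₁)) (B' : ℕ),
      p.s ⊆ q.s ∧ Bnd cd₁ cd₂ q B' ∧ B₀ ≤ B' ∧
      (∀ t v, (t, v) ∈ q.s → ((t, v) ∈ p.s ∨ ∃ u₁ x₁ m s, (u₁, x₁) ∈ S' ∧ B₀ < m ∧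
          ((t, v) = (((1 : Γ₂), m, s), tr g u₁) ∨ (t, v) = (((k : Γ₂), m, s), tr (g * h) x₁)) ∧
          (((1 : Γ₂), m, s), tr g u₁) ∈ q.s ∧ (((k : Γ₂), m, s), tr (g * h) x₁) ∈ q.s)) ∧
      (∀ ux ∈ S', ∃ m s,
          (((1 : Γ₂), m, s), tr g ux.1) ∈ q.s ∧ (((k : Γ₂), m, s), tr (g * h) ux.2) ∈ q.s) := by
    intro S'
    induction S' using Finset.induction_on with
    | empty =>
      intro _
      exact ⟨p, B₀, Finset.Subset.refl _, hB₀p, le_rfl, fun t v htv => Or.inl htv, by simp⟩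
    | @insert ux S₀ hux ih =>
      intro hsub
      obtain ⟨q₀, B₀', hpq₀, hBq₀, hBB₀, hShape, hW⟩ :=
        ih (fun a ha => hsub (Finset.mem_insert_of_mem ha))
      have huxS : ux ∈ S := hsub (Finset.mem_insert_self _ _)
      obtain ⟨u, x⟩ := ux
      have huxl : u.2.1 ≤ B₀ ∧ x.2.1 ≤ B₀ := hB₀S (u, x) huxS
      -- find the new fresh vertex w in the Γ₂-graph
      set T : Finset (Vt Γ₂) :=
        (q₀.s.image Prod.fst) ∪ (q₀.s.image Prod.fst).image (tr k⁻¹) with hT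
      set ε : Vt Γ₂ → Prop := fun t =>
        (∃ v, (t, v) ∈ q₀.s ∧ (gra cd₁).Adj (tr g u) v) ∨
        ((∀ v, (t, v) ∉ q₀.s) ∧
          ∃ v, (tr k t, v) ∈ q₀.s ∧ (gra cd₁).Adj (tr (g * h) x) v) with hε
      obtain ⟨w, hw1, hw2, hwadj⟩ := exists_ext cd₂ T ε B₀'
        (by
          intro t ht
          rcases Finset.mem_union.1 ht with h1 | h1
          · obtain ⟨⟨t', v⟩, hq, rfl⟩ := Finset.mem_image.1 h1
            exact (hBq₀ _ hq).1
          · obtain ⟨t'', ht'', rfl⟩ := Finset.mem_image.1 h1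
            obtain ⟨⟨t', v⟩, hq, rfl⟩ := Finset.mem_image.1 ht''
            exact (hBq₀ _ hq).1) 1
      set w' : Vt Γ₂ := tr k w with hw'
      have hweq : w = ((1 : Γ₂), w.2.1, w.2.2) := Prod.ext hw1 rfl
      have hw'eq : w' = ((k : Γ₂), w.2.1, w.2.2) := by
        rw [hw']
        exact Prod.ext (by rw [tr_fst, hw1, mul_one]) rfl
      have hw'2 : w'.2.1 = B₀' + 1 := by rw [hw'eq]; exact hw2
      have hww' : w ≠ w' := by
        intro hcon
        apply hk1
        rw [hweq, hw'eq] at hcon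
        exact ((Prod.ext_iff.mp hcon).1).symm
      have hdomw : ∀ t v, (t, v) ∈ q₀.s → t ≠ w ∧ t ≠ w' := by
        intro t v htv
        have h2 : t.2.1 ≤ B₀' := (hBq₀ _ htv).1
        constructor
        · intro hcon; rw [hcon, hw2] at h2; omega
        · intro hcon; rw [hcon, hw'2] at h2; omega
      -- conversion for w'
      have hadjw' : ∀ t : Vt Γ₂, (gra cd₂).Adj w' t ↔ (gra cd₂).Adj w (tr k⁻¹ t) := by
        intro t
        have h1 := adj_tr cd₂ k⁻¹ (tr k w) t
        rw [tr_tr, inv_mul_cancel, tr_one] at h1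
        rw [hw']
        exact h1.symm
      -- key adjacency claims
      have claimA : ∀ t v, (t, v) ∈ q₀.s →
          ((gra cd₂).Adj w t ↔ (gra cd₁).Adj (tr g u) v) := by
        intro t v htv
        have hmemT : t ∈ T := Finset.mem_union_left _ (Finset.mem_image_of_mem _ htv)
        rw [hwadj t hmemT]
        constructor
        · rintro (⟨v', hv', hadj⟩ | ⟨hnone, -⟩)
          · rwa [q₀.fn hv' htv] at hadj
          · exact absurd htv (hnone v)
        · intro hadj
          exact Or.inl ⟨v, htv, hadj⟩
      have claimB : ∀ t v, (t, v) ∈ q₀.s →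
          ((gra cd₂).Adj w' t ↔ (gra cd₁).Adj (tr (g * h) x) v) := by
        intro t v htv
        rw [hadjw' t]
        set s₀ : Vt Γ₂ := tr k⁻¹ t with hs₀
        have hts₀ : tr k s₀ = t := by rw [hs₀, tr_tr, mul_inv_cancel, tr_one]
        have hmemT : s₀ ∈ T := Finset.mem_union_right _
          (Finset.mem_image_of_mem _ (Finset.mem_image_of_mem _ htv))
        rw [hwadj s₀ hmemT]
        rcases Classical.em (∃ v₀, (s₀, v₀) ∈ q₀.s) with ⟨v₀, hv₀⟩ | hno
        · -- consistency case
          have hcons : (gra cd₁).Adj (tr g u) v₀ ↔ (gra cd₁).Adj (tr (g * h) x) v := by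
            rcases hShape s₀ v₀ hv₀ with hP | ⟨u₁, x₁, m₁, s₁, hS₀, hm₁, hcase, hw₁mem, hk₁mem⟩
            · -- s₀ is an old (p) vertex; impossible
              exfalso
              rcases hShape t v htv with hP' | ⟨u₂, x₂, m₂, s₂, -, hm₂, hcase₂, -, -⟩
              · exact hkdom _ hP _ hP' hts₀
              · have hl1 : s₀.2.1 ≤ B₀ := (hB₀p _ hP).1
                have hl2 : t.2.1 = s₀.2.1 := by rw [← hts₀]; rfl
                rcases hcase₂ with hc | hc
                · have hc1 : t = ((1 : Γ₂), m₂, s₂) := (Prod.ext_iff.mp hc).1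
                  have : t.2.1 = m₂ := by rw [hc1]
                  omega
                · have hc1 : t = ((k : Γ₂), m₂, s₂) := (Prod.ext_iff.mp hc).1
                  have : t.2.1 = m₂ := by rw [hc1]
                  omega
            · have hS₁ : (u₁, x₁) ∈ S := hsub (Finset.mem_insert_of_mem hS₀)
              rcases hcase with hc | hc
              · -- s₀ = (1,m₁,s₁), v₀ = tr g u₁, t = (k,m₁,s₁), v = tr (g*h) x₁
                have hs₀eq : s₀ = ((1 : Γ₂), m₁, s₁) := (Prod.ext_iff.mp hc).1
                have hv₀eq : v₀ = tr g u₁ := (Prod.ext_iff.mp hc).2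
                have hteq : t = ((k : Γ₂), m₁, s₁) := by
                  rw [← hts₀, hs₀eq]
                  exact Prod.ext (by rw [tr_fst, mul_one]) rfl
                have hveq : v = tr (g * h) x₁ := q₀.fn (hteq ▸ htv) hk₁mem
                rw [hv₀eq, hveq]
                have e1 : (gra cd₁).Adj (tr g u) (tr g u₁) ↔ (gra cd₁).Adj u u₁ :=
                  adj_tr cd₁ g u u₁
                have e2 : (gra cd₁).Adj (tr (g * h) x) (tr (g * h) x₁) ↔ (gra cd₁).Adj x x₁ :=
                  adj_tr cd₁ (g * h) x x₁
                rw [e1, e2]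
                exact hGood.2.2 huxS hS₁
              · -- s₀ = (k,m₁,s₁), v₀ = tr (g*h) x₁, t = (k*k, m₁, s₁)
                have hs₀eq : s₀ = ((k : Γ₂), m₁, s₁) := (Prod.ext_iff.mp hc).1
                have hv₀eq : v₀ = tr (g * h) x₁ := (Prod.ext_iff.mp hc).2
                have hteq : t = ((k * k : Γ₂), m₁, s₁) := by
                  rw [← hts₀, hs₀eq]
                  exact Prod.ext rfl rfl
                rcases hShape t v htv with hP' | ⟨u₂, x₂, m₂, s₂, hS₀₂, hm₂, hcase₂, hw₂mem, hk₂mem⟩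
                · exfalso
                  have hl1 : t.2.1 ≤ B₀ := (hB₀p _ hP').1
                  have : t.2.1 = m₁ := by rw [hteq]
                  omega
                · have hS₂ : (u₂, x₂) ∈ S := hsub (Finset.mem_insert_of_mem hS₀₂)
                  rcases hcase₂ with hc₂ | hc₂
                  · -- k * k = 1 case
                    have hteq₂ : t = ((1 : Γ₂), m₂, s₂) := (Prod.ext_iff.mp hc₂).1
                    have hveq : v = tr g u₂ := (Prod.ext_iff.mp hc₂).2
                    have hms : m₂ = m₁ ∧ s₂ = s₁ := by
                      have := hteq₂ ▸ hteq
                      have h2 := Prod.ext_iff.mp this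
                      exact ⟨(Prod.ext_iff.mp h2.2).1, (Prod.ext_iff.mp h2.2).2⟩
                    have hw₂mem' : (((1 : Γ₂), m₁, s₁), tr g u₂) ∈ q₀.s := by
                      rw [← hms.1, ← hms.2]
                      exact hw₂mem
                    have huu : tr g u₂ = tr g u₁ := q₀.fn hw₂mem' hw₁mem
                    have hu21 : u₂ = u₁ := tr_injective g huu
                    rw [hv₀eq, hveq, hu21]
                    constructor
                    · intro hadj
                      exfalso
                      have : tr (g * h) x₁ = tr g (tr h x₁) := by rw [tr_tr]
                      rw [this] at hadj
                      rw [adj_tr cd₁ g u (tr h x₁)] at hadj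
                      exact hF1 (u, x) huxS (u₁, x₁) hS₁ hadj
                    · intro hadj
                      exfalso
                      have : tr (g * h) x = tr g (tr h x) := by rw [tr_tr]
                      rw [this] at hadj
                      rw [adj_tr cd₁ g (tr h x) u₁] at hadj
                      exact hF1 (u₁, x₁) hS₁ (u, x) huxS ((gra cd₁).adj_symm hadj)
                  · -- k * k = k: impossible
                    exfalso
                    have hteq₂ : t = ((k : Γ₂), m₂, s₂) := (Prod.ext_iff.mp hc₂).1
                    have := hteq₂ ▸ hteq
                    have h2 : k = k * k := (Prod.ext_iff.mp this).1
                    exact hk1 (mul_eq_left.mp h2.symm)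
          rw [← hcons]
          constructor
          · rintro (⟨v', hv', hadj⟩ | ⟨hnone, -⟩)
            · rwa [q₀.fn hv' hv₀] at hadj
            · exact absurd hv₀ (hnone v₀)
          · intro hadj
            exact Or.inl ⟨v₀, hv₀, hadj⟩
        · -- fresh case: s₀ not in the domain
          constructor
          · rintro (⟨v', hv', -⟩ | ⟨-, v', hv', hadj⟩)
            · exact absurd ⟨v', hv'⟩ hno
            · rw [hts₀] at hv'
              rwa [q₀.fn hv' htv] at hadj
          · intro hadj
            refine Or.inr ⟨fun v' hv' => hno ⟨v', hv'⟩, v, by rw [hts₀]; exact htv, hadj⟩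
      -- first insertion: (w', tr (g*h) x)
      obtain ⟨q₁, hq₁sub, hq₁mem, hq₁s⟩ := q₀.insertPair (a := w') (b := tr (g * h) x)
        (fun v' hv' => (hdomw w' v' hv').2 rfl)
        (by
          intro t' ht'
          rcases hShape t' (tr (g * h) x) ht' with hP | ⟨u₁, x₁, m₁, s₁, hS₀, -, hcase, hw₁mem, hk₁mem⟩
          · exact hG2 (u, x) huxS _ hP rfl
          · have hS₁ : (u₁, x₁) ∈ S := hsub (Finset.mem_insert_of_mem hS₀)
            rcases hcase with hc | hc
            · have : tr (g * h) x = tr g u₁ := (Prod.ext_iff.mp hc).2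
              rw [← tr_tr] at this
              exact hF2 (u₁, x₁) hS₁ (u, x) huxS (tr_injective g this).symm
            · have hxx : tr (g * h) x = tr (g * h) x₁ := (Prod.ext_iff.mp hc).2
              have hxeq : x = x₁ := tr_injective _ hxx
              have huu : u = u₁ := hGood.2.1 huxS (by rw [hxeq]; exact hS₁)
              apply hux
              have : ((u, x) : Vt Γ₁ × Vt Γ₁) = (u₁, x₁) := by rw [huu, hxeq]
              rw [this]
              exact hS₀)
        (fun t' v' ht' => claimB t' v' ht')
      -- second insertion: (w, tr g u)
      obtain ⟨q₂, hq₂sub, hq₂mem, hq₂s⟩ := q₁.insertPair (a := w) (b := tr g u)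
        (by
          intro v' hv'
          rcases hq₁s _ hv' with hP | hP
          · exact hww' ((Prod.ext_iff.mp hP).1)
          · exact (hdomw w v' hP).1 rfl)
        (by
          intro t' ht'
          rcases hq₁s _ ht' with hP | hP
          · have : tr g u = tr (g * h) x := (Prod.ext_iff.mp hP).2
            rw [← tr_tr] at this
            exact hF2 (u, x) huxS (u, x) huxS (tr_injective g this)
          · rcases hShape t' (tr g u) hP with hPP | ⟨u₁, x₁, m₁, s₁, hS₀, -, hcase, hw₁mem, hk₁mem⟩
            · exact hG1 (u, x) huxS _ hPP rfl
            · have hS₁ : (u₁, x₁) ∈ S := hsub (Finset.mem_insert_of_mem hS₀)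
              rcases hcase with hc | hc
              · have : tr g u = tr g u₁ := (Prod.ext_iff.mp hc).2
                have huu : u = u₁ := tr_injective g this
                have hxx : x = x₁ := hGood.1 huxS (by rw [huu]; exact hS₁)
                apply hux
                have : ((u, x) : Vt Γ₁ × Vt Γ₁) = (u₁, x₁) := by rw [huu, hxx]
                rw [this]
                exact hS₀
              · have : tr g u = tr (g * h) x₁ := (Prod.ext_iff.mp hc).2
                rw [← tr_tr] at this
                exact hF2 (u, x) huxS (u₁, x₁) hS₁ (tr_injective g this))
        (by
          intro t' v' ht'
          rcases hq₁s _ ht' with hP | hP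
          · have h1 : t' = w' := (Prod.ext_iff.mp hP).1
            have h2 : v' = tr (g * h) x := (Prod.ext_iff.mp hP).2
            rw [h1, h2]
            constructor
            · intro hadj
              exact absurd hadj (not_adj_lvl_eq cd₂ (by rw [hw2, hw'2]))
            · intro hadj
              exfalso
              have : tr (g * h) x = tr g (tr h x) := by rw [tr_tr]
              rw [this, adj_tr cd₁ g u (tr h x)] at hadj
              exact hF1 (u, x) huxS (u, x) huxS hadj
          · exact claimA t' v' hP)
      -- assemble
      refine ⟨q₂, B₀' + 1, fun a ha => hq₂sub (hq₁sub (hpq₀ ha)), ?_, by omega, ?_, ?_⟩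
      · intro a ha
        rcases hq₂s _ ha with hP | hP
        · have h1 : a.1 = w := congrArg Prod.fst hP
          have h2 : a.2 = tr g u := congrArg Prod.snd hP
          rw [h1, h2]
          constructor
          · rw [hw2]
          · have : (tr g u).2.1 = u.2.1 := rfl
            rw [this]
            omega
        · rcases hq₁s _ hP with hPP | hPP
          · have h1 : a.1 = w' := congrArg Prod.fst hPP
            have h2 : a.2 = tr (g * h) x := congrArg Prod.snd hPP
            rw [h1, h2]
            constructor
            · rw [hw'2]
            · have : (tr (g * h) x).2.1 = x.2.1 := rfl
              rw [this]
              omega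
          · exact ⟨(hBq₀ _ hPP).1.trans (by omega), (hBq₀ _ hPP).2.trans (by omega)⟩
      · -- the shape property
        intro t v htv
        have hwq₂ : (((1 : Γ₂), w.2.1, w.2.2), tr g u) ∈ q₂.s := by
          rw [← hweq]; exact hq₂mem
        have hw'q₂ : (((k : Γ₂), w.2.1, w.2.2), tr (g * h) x) ∈ q₂.s := by
          rw [← hw'eq]; exact hq₂sub hq₁mem
        rcases hq₂s _ htv with hP | hP
        · right
          refine ⟨u, x, w.2.1, w.2.2, Finset.mem_insert_self _ _, by omega, ?_, hwq₂, hw'q₂⟩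
          left
          rw [hweq] at hP
          exact hP
        · rcases hq₁s _ hP with hPP | hPP
          · right
            refine ⟨u, x, w.2.1, w.2.2, Finset.mem_insert_self _ _, by omega, ?_, hwq₂, hw'q₂⟩
            right
            rw [hw'eq] at hPP
            exact hPP
          · rcases hShape t v hPP with hQ | ⟨u₁, x₁, m₁, s₁, hS₀, hm₁, hcase, hw₁mem, hk₁mem⟩
            · exact Or.inl hQ
            · exact Or.inr ⟨u₁, x₁, m₁, s₁, Finset.mem_insert_of_mem hS₀, hm₁, hcase,
                hq₂sub (hq₁sub hw₁mem), hq₂sub (hq₁sub hk₁mem)⟩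
      · -- witnesses
        intro ux' hux'
        rcases Finset.mem_insert.1 hux' with rfl | hux'
        · exact ⟨w.2.1, w.2.2, by rw [← hweq]; exact hq₂mem, by rw [← hw'eq]; exact hq₂sub hq₁mem⟩
        · obtain ⟨m, s, h1, h2⟩ := hW ux' hux'
          exact ⟨m, s, hq₂sub (hq₁sub h1), hq₂sub (hq₁sub h2)⟩
  obtain ⟨q, B', hpq, -, -, -, hW⟩ := inner S (Finset.Subset.refl _)
  exact ⟨q, hpq, fun _ => ⟨g, h, k, hW⟩⟩

end Forcing

/-! ### Main theorem -/

section Main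

open Monoid

variable {Γ₁ Γ₂ : Type*} [Group Γ₁] [Group Γ₂]
  [Countable Γ₁] [Countable Γ₂] [Infinite Γ₁] [Infinite Γ₂]

theorem main {V : Type*} [Countable V] (R : SimpleGraph V) (hR : R.HasPropR) :
    ∃ ρ : Coprod Γ₁ Γ₂ →* (R ≃g R), Function.Injective ρ ∧ IsHomogeneousAction R ρ := by
  classical
  obtain ⟨c₁, hc₁⟩ := exists_injective_nat Γ₁
  obtain ⟨c₂, hc₂⟩ := exists_injective_nat Γ₂
  set cd₁ : Γ₁ ↪ ℕ := ⟨c₁, hc₁⟩ with hcd₁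
  set cd₂ : Γ₂ ↪ ℕ := ⟨c₂, hc₂⟩ with hcd₂
  -- the tasks
  haveI : Nonempty ((Vt Γ₂ ⊕ Vt Γ₁) ⊕ (Finset (Vt Γ₁ × Vt Γ₁) ⊕ List (Γ₁ ⊕ Γ₂))) :=
    ⟨Sum.inr (Sum.inr [])⟩
  set D : ((Vt Γ₂ ⊕ Vt Γ₁) ⊕ (Finset (Vt Γ₁ × Vt Γ₁) ⊕ List (Γ₁ ⊕ Γ₂))) →
      PI (gra cd₂) (gra cd₁) → Prop := fun i p =>
    match i with
    | .inl (.inl w) => ∃ v, (w, v) ∈ p.s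
    | .inl (.inr v) => ∃ w, (w, v) ∈ p.s
    | .inr (.inl S) => Good cd₁ S → ∃ (g h : Γ₁) (k : Γ₂), ∀ ux ∈ S, ∃ m s,
        (((1 : Γ₂), m, s), tr g ux.1) ∈ p.s ∧ (((k : Γ₂), m, s), tr (g * h) ux.2) ∈ p.s
    | .inr (.inr L) => red L = [] ∨ ∃ v x' : Vt Γ₁, v ≠ x' ∧
        ∀ e, Ext cd₁ cd₂ e p → evalL cd₁ cd₂ e (red L) v = x' with hD
  obtain ⟨f, hmono, hdone⟩ := exists_chain (G := gra cd₂) (H := gra cd₁) D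
    (by
      rintro ((w | v) | (S | L)) p
      · obtain ⟨q, h1, h2⟩ := PI.extDom (propR cd₁) p w
        exact ⟨q, h1, h2⟩
      · obtain ⟨q, h1, h2⟩ := PI.extRan (propR cd₂) p v
        exact ⟨q, h1, h2⟩
      · obtain ⟨q, h1, h2⟩ := handler_t3 cd₁ cd₂ p S
        exact ⟨q, h1, h2⟩
      · obtain ⟨q, h1, h2⟩ := handler_t4 cd₁ cd₂ p L
        exact ⟨q, h1, h2⟩)
    PI.empty
  obtain ⟨e, he⟩ := limit_iso f hmono
    (fun w => by
      obtain ⟨n, v, h⟩ := hdone (Sum.inl (Sum.inl w))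
      exact ⟨n, v, h⟩)
    (fun v => by
      obtain ⟨n, w, h⟩ := hdone (Sum.inl (Sum.inr v))
      exact ⟨n, w, h⟩)
  have hExt : ∀ n, Ext cd₁ cd₂ e (f n) := fun n w v hwv => he n w v hwv
  set ρ₀ : Coprod Γ₁ Γ₂ →* (gra cd₁ ≃g gra cd₁) := rho cd₁ cd₂ e with hρ₀
  -- injectivity of ρ₀
  have hinj₀ : Function.Injective ρ₀ := by
    rw [injective_iff_map_eq_one]
    intro γ hγ
    by_contra hne
    obtain ⟨L, hL⟩ := exists_list γ
    obtain ⟨n, hn⟩ := hdone (Sum.inr (Sum.inr L))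
    rcases hn with hredL | ⟨v, x', hvx, heval⟩
    · apply hne
      rw [← hL, ← prodEmb_red, hredL, prodEmb_nil]
    · apply hvx
      have h1 : ρ₀ γ v = evalL cd₁ cd₂ e (red L) v := by
        rw [← hL, ← prodEmb_red]
        exact rho_prodEmb cd₁ cd₂ e (red L) v
      have h2 : ρ₀ γ v = v := by rw [hγ]; rfl
      rw [← h2, h1]
      exact (heval e (hExt n)).symm ▸ rfl
  -- homogeneity of ρ₀ on `gra cd₁`
  have hhom₀ : IsHomogeneousAction (gra cd₁) ρ₀ := by
    intro A φ hinj hadj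
    set S : Finset (Vt Γ₁ × Vt Γ₁) := A.image (fun u => (u, φ u)) with hS
    have hmemS : ∀ {u x}, (u, x) ∈ S ↔ u ∈ A ∧ x = φ u := by
      intro u x
      constructor
      · intro h
        obtain ⟨a, ha, hax⟩ := Finset.mem_image.1 h
        have h1 : a = u := (Prod.ext_iff.mp hax).1
        have h2 : φ a = x := (Prod.ext_iff.mp hax).2
        refine ⟨h1 ▸ ha, ?_⟩
        rw [← h2, ← h1]
      · rintro ⟨h1, rfl⟩
        exact Finset.mem_image_of_mem _ h1
    have hGoodS : Good cd₁ S := by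
      refine ⟨?_, ?_, ?_⟩
      · intro u x x' h1 h2
        rw [(hmemS.1 h1).2, (hmemS.1 h2).2]
      · intro u u' x h1 h2
        obtain ⟨hu, hx⟩ := hmemS.1 h1
        obtain ⟨hu', hx'⟩ := hmemS.1 h2
        exact hinj hu hu' (by rw [← hx, ← hx'])
      · intro u x v y h1 h2
        obtain ⟨hu, rfl⟩ := hmemS.1 h1
        obtain ⟨hv, rfl⟩ := hmemS.1 h2
        exact hadj u hu v hv
    obtain ⟨n, hn⟩ := hdone (Sum.inr (Sum.inl S))
    obtain ⟨g, h, k, hw⟩ := hn hGoodS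
    refine ⟨Coprod.inl (g * h)⁻¹ * (Coprod.inr k * Coprod.inl g), ?_⟩
    intro u hu
    obtain ⟨m, s, hp1, hp2⟩ := hw (u, φ u) (hmemS.2 ⟨hu, rfl⟩)
    have he1 : e ((1 : Γ₂), m, s) = tr g u := he n _ _ hp1
    have he2 : e ((k : Γ₂), m, s) = tr (g * h) (φ u) := he n _ _ hp2
    have hstep : ρ₀ (Coprod.inl (g * h)⁻¹ * (Coprod.inr k * Coprod.inl g)) u
        = ρ₀ (Coprod.inl (g * h)⁻¹) (ρ₀ (Coprod.inr k) (ρ₀ (Coprod.inl g) u)) := by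
      rw [map_mul, map_mul]
      rfl
    have hsymm : e.symm (tr g u) = ((1 : Γ₂), m, s) := by
      rw [← he1]
      exact e.toEquiv.symm_apply_apply _
    have htrk : tr k (((1 : Γ₂), m, s) : Vt Γ₂) = ((k : Γ₂), m, s) :=
      Prod.ext (by rw [tr_fst, mul_one]) rfl
    have s1 : ρ₀ (Coprod.inl g) u = tr g u := rho_inl cd₁ cd₂ e g u
    have s2 : ρ₀ (Coprod.inr k) (tr g u) = e (tr k (e.symm (tr g u))) :=
      rho_inr cd₁ cd₂ e k (tr g u)
    have s3 : ρ₀ (Coprod.inl (g * h)⁻¹) (tr (g * h) (φ u)) = tr (g * h)⁻¹ (tr (g * h) (φ u)) :=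
      rho_inl cd₁ cd₂ e (g * h)⁻¹ (tr (g * h) (φ u))
    rw [hstep, s1, s2, hsymm, htrk, he2, s3, tr_tr, inv_mul_cancel, tr_one]
  -- transport along an isomorphism with R
  obtain ⟨Ψ⟩ : Nonempty (gra cd₁ ≃g R) := iso_of_hasPropR (propR cd₁) hR
  refine ⟨(conjHom Ψ).comp ρ₀, (conjHom_injective Ψ).comp hinj₀, ?_⟩
  intro A φ hinj hadj
  set A' : Finset (Vt Γ₁) := A.image Ψ.symm with hA'
  set φ' : Vt Γ₁ → Vt Γ₁ := fun a => Ψ.symm (φ (Ψ a)) with hφ'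
  have hmemA' : ∀ {a}, a ∈ A' → Ψ a ∈ A := by
    intro a ha
    obtain ⟨b, hb, rfl⟩ := Finset.mem_image.1 ha
    rwa [Ψ.apply_symm_apply]
  obtain ⟨γ, hγ⟩ := hhom₀ A' φ'
    (by
      intro a ha b hb hab
      have ha' : a ∈ A' := ha
      have hb' : b ∈ A' := hb
      have h1 : φ (Ψ a) = φ (Ψ b) := Ψ.symm.injective hab
      have h2 : Ψ a = Ψ b := hinj (hmemA' ha') (hmemA' hb') h1
      exact Ψ.injective h2)
    (by
      intro a ha b hb
      have h1 : (gra cd₁).Adj a b ↔ R.Adj (Ψ a) (Ψ b) := Ψ.map_rel_iff.symm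
      have h2 := hadj (Ψ a) (hmemA' ha) (Ψ b) (hmemA' hb)
      have h3 : R.Adj (φ (Ψ a)) (φ (Ψ b)) ↔ (gra cd₁).Adj (φ' a) (φ' b) := by
        rw [hφ']
        exact (Ψ.symm.map_rel_iff).symm
      rw [h1, h2, h3])
  refine ⟨γ, ?_⟩
  intro u hu
  have hΨu : Ψ.symm u ∈ A' := Finset.mem_image_of_mem _ hu
  have h1 : ((conjHom Ψ).comp ρ₀ γ) u = Ψ (ρ₀ γ (Ψ.symm u)) := rfl
  rw [h1, hγ _ hΨu, hφ']
  simp only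
  rw [Ψ.apply_symm_apply, Ψ.apply_symm_apply]

end Main

end FPH

/-- The free product of two countably infinite groups admits a faithful homogeneous
action on any countable graph with property (R). -/
theorem freeProduct_inftyInfty_homogeneous {Γ₁ Γ₂ : Type*} [Group Γ₁] [Group Γ₂]
    [Countable Γ₁] [Countable Γ₂] [Infinite Γ₁] [Infinite Γ₂]
    {V : Type*} [Countable V] (R : SimpleGraph V) (hR : R.HasPropR) :
    ∃ ρ : Monoid.Coprod Γ₁ Γ₂ →* (R ≃g R),
      Function.Injective ρ ∧ IsHomogeneousAction R ρ := by
  exact FPH.main R hR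
end
end
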